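/- arXiv:2212.09604 — 8 statements merged into one kernel-verified Lean document; each statement's English description precedes it below -/
import Mathlib

section
/- Let 0 < p < q be coprime integers. Then the maximum signature satisfies the recursion σ̂(p, q+p) = σ̂(p, q) + p²/2 if p is even, and σ̂(p, q+p) = σ̂(p, q) + (p²−1)/2 if p is odd. -/
/-- Number of integer pairs `(i, j)` with `0 < i < p`, `0 < j < q` and
`t < i/p + j/q < t + 1` (Litherland's lattice-point count). -/
noncomputable def latticeCount (p q : ℕ) (t : ℝ) : ℕ :=
  Set.ncard {ij : ℕ × ℕ | 0 < ij.1 ∧ ij.1 < p ∧ 0 < ij.2 ∧ ij.2 < q ∧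
    t < (ij.1 : ℝ) / p + (ij.2 : ℝ) / q ∧ (ij.1 : ℝ) / p + (ij.2 : ℝ) / q < t + 1}

/-- The Levine–Tristram signature of the torus knot `T(p,q)` at `e^{2πit}`,
via Litherland's formula: `σ_t(p,q) = 2 N_t(p,q) − (p−1)(q−1)`. -/
noncomputable def sigmaT (p q : ℕ) (t : ℝ) : ℤ :=
  2 * (latticeCount p q t : ℤ) - ((p : ℤ) - 1) * ((q : ℤ) - 1)

/-- The maximum signature `σ̂(p,q) = sup_{t ∈ (0,1)} σ_t(p,q)`. -/
noncomputable def sigmaMax (p q : ℕ) : ℤ :=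
  sSup (sigmaT p q '' Set.Ioo (0 : ℝ) 1)

/-- The classical signature `σ(p,q) = σ_{1/2}(p,q)`. -/
noncomputable def sigmaClassical (p q : ℕ) : ℤ :=
  sigmaT p q (1 / 2)

namespace SigAux

def G (p q : ℕ) (k : ℤ) : ℤ :=
  ∑ i ∈ Finset.Ico 1 p, |2 * k + 1 - 2 * (i : ℤ) * (q : ℤ)| / (2 * (p : ℤ))

lemma abs_div_add (p : ℕ) (hp : 0 < p) (a b : ℤ)
    (h : (0 < a ∧ 0 ≤ b) ∨ (a < 0 ∧ b ≤ 0)) :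
    |a + 2 * (p : ℤ) * b| / (2 * p) = |a| / (2 * p) + |b| := by
  have hp' : (0:ℤ) < 2 * p := by positivity
  rcases h with ⟨ha, hb⟩ | ⟨ha, hb⟩
  · have h1 : |a + 2 * (p:ℤ) * b| = |a| + 2 * p * |b| := by
      rw [abs_of_pos ha, abs_of_nonneg hb, abs_of_pos]; positivity
    rw [h1, Int.add_mul_ediv_left _ _ (ne_of_gt hp')]
  · have h1 : |a + 2 * (p:ℤ) * b| = |a| + 2 * p * |b| := by
      rw [abs_of_neg ha, abs_of_nonpos hb, abs_of_neg]
      · ring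
      · have : 2 * (p:ℤ) * b ≤ 0 := mul_nonpos_of_nonneg_of_nonpos (by positivity) hb
        omega
    rw [h1, Int.add_mul_ediv_left _ _ (ne_of_gt hp')]

lemma G_shift (p q : ℕ) (hp : 0 < p) (m k : ℤ)
    (hm0 : 0 ≤ m) (hmp : m ≤ p)
    (h1 : (m - 1) * q ≤ k) (h2 : k < (m + 1) * q) :
    G p (q + p) (k + m * p) = G p q k + ∑ i ∈ Finset.Ico 1 p, |m - (i : ℤ)| := by
  rw [G, G, ← Finset.sum_add_distrib]
  apply Finset.sum_congr rfl
  intro i hi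
  simp only [Finset.mem_Ico] at hi
  have e1 : 2 * (k + m * p) + 1 - 2 * (i:ℤ) * ((q:ℕ) + (p:ℕ) : ℕ) =
      (2 * k + 1 - 2 * i * q) + 2 * (p:ℤ) * (m - i) := by push_cast; ring
  rw [e1]
  apply abs_div_add p hp
  have hiq : 2 * (i:ℤ) * (q:ℤ) = 2 * ((i:ℤ) * (q:ℤ)) := by ring
  have hlow : (i:ℤ) < m → (i:ℤ) * q ≤ (m - 1) * q :=
    fun h => mul_le_mul_of_nonneg_right (by omega) (by positivity)
  have hhigh : m < (i:ℤ) → (m + 1) * q ≤ (i:ℤ) * q :=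
    fun h => mul_le_mul_of_nonneg_right (by omega) (by positivity)
  rcases lt_or_ge (0:ℤ) (2*k + 1 - 2*i*q) with h | h
  · left
    refine ⟨h, ?_⟩
    by_contra hb
    push_neg at hb
    have := hhigh (by omega)
    omega
  · right
    constructor
    · omega
    · by_contra hb
      push_neg at hb
      have := hlow (by omega)
      omega

/-- reindexing `i ↦ p - i` on `Ico 1 p`. -/
lemma sum_reflect {M : Type*} [AddCommMonoid M] (p : ℕ) (f : ℕ → M) :
    ∑ i ∈ Finset.Ico 1 p, f (p - i) = ∑ i ∈ Finset.Ico 1 p, f i := by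
  apply Finset.sum_nbij' (fun i => p - i) (fun i => p - i)
  · intro a ha; simp only [Finset.mem_Ico] at *; omega
  · intro a ha; simp only [Finset.mem_Ico] at *; omega
  · intro a ha; simp only [Finset.mem_Ico] at *; omega
  · intro a ha; simp only [Finset.mem_Ico] at *; omega
  · intro a ha; rfl

lemma G_reflect (p q : ℕ) (k : ℤ) :
    G p q ((p:ℤ) * q - 1 - k) = G p q k := by
  rw [G, G]
  rw [← sum_reflect p (fun i => |2 * k + 1 - 2 * (i : ℤ) * (q : ℤ)| / (2 * (p : ℤ)))]
  apply Finset.sum_congr rfl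
  intro i hi
  simp only [Finset.mem_Ico] at hi
  congr 1
  have hc : ((p - i : ℕ) : ℤ) = (p:ℤ) - i := by
    have : i ≤ p := by omega
    push_cast [this]; ring
  rw [hc]
  have : 2 * ((p:ℤ) * q - 1 - k) + 1 - 2 * (i:ℤ) * q = -(2 * k + 1 - 2 * ((p:ℤ) - i) * q) := by ring
  rw [this, abs_neg]

/-- moving the window up by `q` towards the centre does not increase `G`. -/
lemma G_move (p q : ℕ) (k : ℤ) (hk : 0 ≤ k) (hband : 2 * k + 1 ≤ ((p:ℤ) - 1) * q) :
    G p q (k + q) ≤ G p q k := by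
  rcases Nat.lt_or_ge p 2 with hp | hp
  · interval_cases p <;> simp [G]
  -- p ≥ 2
  have hstep : G p q (k + q) = ∑ i ∈ Finset.Ico 0 (p-1), |2 * k + 1 - 2 * (i : ℤ) * (q : ℤ)| / (2 * (p : ℤ)) := by
    rw [G]
    apply Finset.sum_nbij' (fun i => i - 1) (fun i => i + 1)
    · intro a ha; simp only [Finset.mem_Ico] at *; omega
    · intro a ha; simp only [Finset.mem_Ico] at *; omega
    · intro a ha; simp only [Finset.mem_Ico] at *; omega
    · intro a ha; simp only [Finset.mem_Ico] at *; omega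
    · intro a ha
      simp only [Finset.mem_Ico] at ha
      congr 2
      have hc : ((a - 1 : ℕ) : ℤ) = (a:ℤ) - 1 := by omega
      rw [hc]; ring
  have h1 : Finset.Ico 0 (p-1) = insert 0 (Finset.Ico 1 (p-1)) := by
    ext a; simp only [Finset.mem_insert, Finset.mem_Ico]; omega
  have h2 : Finset.Ico 1 p = insert (p-1) (Finset.Ico 1 (p-1)) := by
    ext a; simp only [Finset.mem_insert, Finset.mem_Ico]; omega
  have hne1 : (0:ℕ) ∉ Finset.Ico 1 (p-1) := by simp
  have hne2 : (p-1) ∉ Finset.Ico 1 (p-1) := by simp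
  rw [hstep, h1, Finset.sum_insert hne1, G, h2, Finset.sum_insert hne2]
  have hkey : |2 * k + 1 - 2 * ((0:ℕ) : ℤ) * (q : ℤ)| / (2 * (p : ℤ))
      ≤ |2 * k + 1 - 2 * ((p-1 : ℕ) : ℤ) * (q : ℤ)| / (2 * (p : ℤ)) := by
    have hc : ((p - 1 : ℕ) : ℤ) = (p:ℤ) - 1 := by omega
    rw [hc]
    have e0 : |2 * k + 1 - 2 * ((0:ℕ):ℤ) * (q:ℤ)| = 2 * k + 1 := by
      rw [show 2 * k + 1 - 2 * ((0:ℕ):ℤ) * (q:ℤ) = 2*k+1 by push_cast; ring]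
      exact abs_of_pos (by omega)
    have e1 : |2 * k + 1 - 2 * ((p:ℤ) - 1) * q| = 2 * ((p:ℤ)-1) * q - (2*k+1) := by
      rw [abs_of_nonpos (by nlinarith)]; ring
    rw [e0, e1]
    apply Int.ediv_le_ediv (by positivity)
    nlinarith
  exact add_le_add hkey le_rfl

end SigAux

namespace SigAux

/-- `S₀ p` : the minimal total distance sum. -/
def S0 (p : ℕ) : ℤ := ∑ i ∈ Finset.Ico 1 p, |((p / 2 : ℕ) : ℤ) - (i : ℤ)|

lemma S0_min (p : ℕ) (j : ℤ) : S0 p ≤ ∑ i ∈ Finset.Ico 1 p, |j - (i : ℤ)| := by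
  have hrefl : ∀ c : ℤ, ∑ i ∈ Finset.Ico 1 p, |c - ((p:ℤ) - (i:ℤ))| = ∑ i ∈ Finset.Ico 1 p, |c - (i:ℤ)| := by
    intro c
    rw [← sum_reflect p (fun i => |c - (i:ℤ)|)]
    apply Finset.sum_congr rfl
    intro i hi
    simp only [Finset.mem_Ico] at hi
    have hc : ((p - i : ℕ) : ℤ) = (p:ℤ) - i := by omega
    rw [hc]
  have key : ∀ c : ℤ,
      2 * ∑ i ∈ Finset.Ico 1 p, |c - (i:ℤ)| =
        ∑ i ∈ Finset.Ico 1 p, (|c - (i:ℤ)| + |c - ((p:ℤ) - i)|) := by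
    intro c
    rw [Finset.sum_add_distrib, hrefl c]; ring
  have hub : 2 * S0 p = ∑ i ∈ Finset.Ico 1 p, |(p:ℤ) - 2*i| := by
    rw [S0, key]
    apply Finset.sum_congr rfl
    intro i hi
    simp only [Finset.mem_Ico] at hi
    rcases le_or_gt (i:ℤ) ((p/2:ℕ):ℤ) with h | h
    · rw [abs_of_nonneg (by omega), abs_of_nonpos (by omega), abs_of_nonneg (by omega)]
      ring
    · rw [abs_of_nonpos (by omega), abs_of_nonneg (by omega), abs_of_nonpos (by omega)]
      ring
  have hlb : ∑ i ∈ Finset.Ico 1 p, |(p:ℤ) - 2*i| ≤ 2 * ∑ i ∈ Finset.Ico 1 p, |j - (i:ℤ)| := by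
    rw [key j]
    apply Finset.sum_le_sum
    intro i hi
    have habs := abs_sub (j - ((p:ℤ) - i)) (j - (i:ℤ))
    have e : (j - ((p:ℤ) - i)) - (j - (i:ℤ)) = -((p:ℤ) - 2*i) := by ring
    rw [e, abs_neg] at habs
    omega
  omega

lemma S0_val (p : ℕ) (hp : 0 < p) :
    2 * S0 p = ((p:ℤ) - 1) * p - (if Even p then (p:ℤ)^2/2 else ((p:ℤ)^2 - 1)/2) := by
  set m : ℕ := p / 2 with hm
  have hsplit : Finset.Ico 1 p = Finset.Ico 1 (m+1) ∪ Finset.Ico (m+1) p := by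
    rw [Finset.Ico_union_Ico_eq_Ico] <;> omega
  have hdisj : Disjoint (Finset.Ico 1 (m+1)) (Finset.Ico (m+1) p) :=
    Finset.Ico_disjoint_Ico_consecutive _ _ _
  have e1 : ∑ i ∈ Finset.Ico 1 (m+1), |((m:ℕ):ℤ) - (i:ℤ)| = ∑ i ∈ Finset.Ico 1 (m+1), ((m:ℤ) - i) := by
    apply Finset.sum_congr rfl
    intro i hi; simp only [Finset.mem_Ico] at hi
    exact abs_of_nonneg (by omega)
  have e2 : ∑ i ∈ Finset.Ico (m+1) p, |((m:ℕ):ℤ) - (i:ℤ)| = ∑ i ∈ Finset.Ico (m+1) p, ((i:ℤ) - m) := by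
    apply Finset.sum_congr rfl
    intro i hi; simp only [Finset.mem_Ico] at hi
    rw [abs_of_nonpos (by omega)]; ring
  have gauss : ∀ a b : ℕ, a ≤ b → 2 * ∑ i ∈ Finset.Ico a b, (i:ℤ) = (b:ℤ)*((b:ℤ)-1) - (a:ℤ)*((a:ℤ)-1) := by
    intro a b hab
    induction b with
    | zero => simp; omega
    | succ n ih =>
      rcases Nat.lt_or_ge a (n+1) with h | h
      · rw [Finset.sum_Ico_succ_top (by omega)]
        have hh := ih (by omega)
        push_cast at hh ⊢
        linarith
      · have : a = n + 1 := by omega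
        subst this
        simp
  have g1 := gauss 1 (m+1) (by omega)
  have g2 := gauss (m+1) p (by omega)
  push_cast at g1 g2
  have c1 : 2 * ∑ i ∈ Finset.Ico 1 (m+1), ((m:ℤ) - i) = 2*(m:ℤ)*m - ((m:ℤ)+1)*m := by
    have hrw : ∑ i ∈ Finset.Ico 1 (m+1), ((m:ℤ) - i)
        = ((Finset.Ico 1 (m+1)).card : ℤ) * (m:ℤ) - ∑ i ∈ Finset.Ico 1 (m+1), (i:ℤ) := by
      rw [Finset.sum_sub_distrib, Finset.sum_const, nsmul_eq_mul]
    rw [hrw, Nat.card_Ico, Nat.add_sub_cancel]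
    linear_combination -g1
  have c2 : 2 * ∑ i ∈ Finset.Ico (m+1) p, ((i:ℤ) - m)
      = ((p:ℤ)*((p:ℤ)-1) - ((m:ℤ)+1)*m) - 2*((p:ℤ) - (m+1))*m := by
    have hrw : ∑ i ∈ Finset.Ico (m+1) p, ((i:ℤ) - m)
        = ∑ i ∈ Finset.Ico (m+1) p, (i:ℤ) - ((Finset.Ico (m+1) p).card : ℤ) * (m:ℤ) := by
      rw [Finset.sum_sub_distrib, Finset.sum_const, nsmul_eq_mul]
    have hcard : (((Finset.Ico (m+1) p).card : ℕ) : ℤ) = (p:ℤ) - (m+1) := by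
      rw [Nat.card_Ico]; omega
    rw [hrw, hcard]
    linear_combination g2
  have hS : 2 * S0 p = (2*(m:ℤ)*m - ((m:ℤ)+1)*m)
      + (((p:ℤ)*((p:ℤ)-1) - ((m:ℤ)+1)*m) - 2*((p:ℤ) - (m+1))*m) := by
    rw [S0, hsplit, Finset.sum_union hdisj, e1, e2, mul_add, c1, c2]
  rw [hS]
  rcases Nat.even_or_odd p with he | ho
  · rw [if_pos he]
    have hpc : (p:ℤ) = 2*(m:ℤ) := by
      obtain ⟨c, hc⟩ := he
      omega
    rw [hpc]
    have hdiv : ((2*(m:ℤ)))^2 / 2 = 2 * (m:ℤ)^2 := by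
      rw [show ((2*(m:ℤ)))^2 = 2 * (2 * (m:ℤ)^2) by ring]
      exact Int.mul_ediv_cancel_left _ (by norm_num)
    rw [hdiv]; ring
  · rw [if_neg (Nat.not_even_iff_odd.mpr ho)]
    have hpc : (p:ℤ) = 2*(m:ℤ)+1 := by
      have := Nat.odd_iff.mp ho
      omega
    rw [hpc]
    have hdiv : ((2*(m:ℤ)+1)^2 - 1) / 2 = 2 * (m:ℤ)^2 + 2*(m:ℤ) := by
      rw [show (2*(m:ℤ)+1)^2 - 1 = 2 * (2 * (m:ℤ)^2 + 2*(m:ℤ)) by ring]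
      exact Int.mul_ediv_cancel_left _ (by norm_num)
    rw [hdiv]; ring

end SigAux

namespace SigAux

/-- window index set -/
noncomputable def KS (p q : ℕ) : Finset ℤ := Finset.Icc 0 ((p:ℤ)*q - 1)

lemma KS_nonempty (p q : ℕ) (hp : 0 < p) (hq : 0 < q) : (KS p q).Nonempty := by
  refine ⟨0, ?_⟩
  simp only [KS, Finset.mem_Icc]
  constructor
  · rfl
  · have : (1:ℤ) ≤ (p:ℤ)*q := by
      have : (1:ℤ) ≤ (p:ℤ) := by exact_mod_cast hp
      have h2 : (1:ℤ) ≤ (q:ℤ) := by exact_mod_cast hq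
      nlinarith
    omega

noncomputable def mV (p q : ℕ) : ℤ :=
  if h : (KS p q).Nonempty then (KS p q).inf' h (G p q) else 0

lemma mV_le (p q : ℕ) (hp : 0 < p) (hq : 0 < q) {k : ℤ} (hk : k ∈ KS p q) :
    mV p q ≤ G p q k := by
  rw [mV, dif_pos (KS_nonempty p q hp hq)]
  exact Finset.inf'_le _ hk

lemma exists_mV (p q : ℕ) (hp : 0 < p) (hq : 0 < q) :
    ∃ k ∈ KS p q, G p q k = mV p q := by
  rw [mV, dif_pos (KS_nonempty p q hp hq)]
  obtain ⟨k, hk, he⟩ := Finset.exists_mem_eq_inf' (KS_nonempty p q hp hq) (G p q)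
  exact ⟨k, hk, he.symm⟩

/-- there is a minimiser in the central band -/
lemma exists_band_argmin (p q : ℕ) (hp : 0 < p) (hq : 0 < q) :
    ∃ k : ℤ, (0 ≤ k ∧ k < (p:ℤ)*q) ∧
      (((p:ℤ)-1)*q ≤ 2*k+1 ∧ 2*k+1 ≤ ((p:ℤ)+1)*q) ∧ G p q k = mV p q := by
  have hp1 : (1:ℤ) ≤ (p:ℤ) := by exact_mod_cast hp
  have hq1 : (1:ℤ) ≤ (q:ℤ) := by exact_mod_cast hq
  have hexp1 : ((p:ℤ)-1)*q = (p:ℤ)*q - q := by ring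
  have hexp2 : ((p:ℤ)+1)*q = (p:ℤ)*q + q := by ring
  have hpq1 : (1:ℤ) ≤ (p:ℤ)*q := by nlinarith
  have hmul : ((p:ℤ)+1)*q ≤ 2*((p:ℤ)*q) := by nlinarith
  obtain ⟨k₀, hk₀, hmin⟩ := exists_mV p q hp hq
  simp only [KS, Finset.mem_Icc] at hk₀
  obtain ⟨k₁, hk₁, hhalf, hG₁⟩ :
      ∃ k₁ : ℤ, (0 ≤ k₁ ∧ k₁ < (p:ℤ)*q) ∧ 2*k₁+1 ≤ (p:ℤ)*q ∧ G p q k₁ = mV p q := by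
    rcases le_or_gt (2*k₀+1) ((p:ℤ)*q) with h | h
    · exact ⟨k₀, ⟨hk₀.1, by omega⟩, h, hmin⟩
    · refine ⟨(p:ℤ)*q - 1 - k₀, ⟨by omega, by omega⟩, by omega, ?_⟩
      rw [G_reflect]; exact hmin
  have climb : ∀ n : ℕ, ∀ k : ℤ, 0 ≤ k → 2*k+1 < ((p:ℤ)+1)*q →
      ((((p:ℤ)-1)*q - (2*k+1))).toNat ≤ n →
      ∃ k' : ℤ, (0 ≤ k' ∧ k' < (p:ℤ)*q) ∧
        (((p:ℤ)-1)*q ≤ 2*k'+1 ∧ 2*k'+1 ≤ ((p:ℤ)+1)*q) ∧ G p q k' ≤ G p q k := by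
    intro n
    induction n with
    | zero =>
      intro k hk0 hlt hmeas
      refine ⟨k, ⟨hk0, by omega⟩, ⟨by omega, by omega⟩, le_refl _⟩
    | succ n ih =>
      intro k hk0 hlt hmeas
      rcases le_or_gt (((p:ℤ)-1)*q) (2*k+1) with h | h
      · exact ⟨k, ⟨hk0, by omega⟩, ⟨h, by omega⟩, le_refl _⟩
      · have hmove := G_move p q k hk0 (le_of_lt h)
        obtain ⟨k', h1, h2, h3⟩ := ih (k + q) (by omega) (by omega) (by omega)
        exact ⟨k', h1, h2, le_trans h3 hmove⟩
  obtain ⟨k', h1, h2, h3⟩ := climb ((((p:ℤ)-1)*q - (2*k₁+1))).toNat k₁ hk₁.1 (by omega) (le_refl _)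
  refine ⟨k', h1, h2, le_antisymm (le_trans h3 (le_of_eq hG₁)) ?_⟩
  exact mV_le p q hp hq (by simp only [KS, Finset.mem_Icc]; omega)

/-- the key relation between the two minima. -/
lemma mV_shift (p q : ℕ) (hp : 0 < p) (hpq : p < q) : mV p (q+p) = mV p q + S0 p := by
  have hq : 0 < q := lt_trans hp hpq
  have hp1 : (1:ℤ) ≤ (p:ℤ) := by exact_mod_cast hp
  have hq1 : (1:ℤ) ≤ (q:ℤ) := by exact_mod_cast hq
  have hpq1 : (p:ℤ) < (q:ℤ) := by exact_mod_cast hpq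
  apply le_antisymm
  · -- use band argmin for q
    obtain ⟨k, ⟨hk0, hkpq⟩, ⟨hb1, hb2⟩, hGk⟩ := exists_band_argmin p q hp hq
    set m : ℤ := ((p/2 : ℕ) : ℤ) with hm
    have hm0 : 0 ≤ m := by positivity
    have hmp : m ≤ (p:ℤ) := by omega
    have hcond1 : (m - 1) * q ≤ k := by
      have h1 : (2*m - 1) * q ≤ ((p:ℤ)-1)*q :=
        mul_le_mul_of_nonneg_right (by omega) (by omega)
      have e1 : (2*m - 1) * q = 2*(m*q) - q := by ring
      have e2 : (m - 1) * q = m*q - q := by ring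
      omega
    have hcond2 : k < (m + 1) * q := by
      have h1 : ((p:ℤ)+1)*q ≤ (2*m + 2) * q :=
        mul_le_mul_of_nonneg_right (by omega) (by omega)
      have e1 : (2*m + 2) * q = 2*(m*q) + 2*q := by ring
      have e2 : (m + 1) * q = m*q + q := by ring
      omega
    have hshift := G_shift p q hp m k hm0 hmp hcond1 hcond2
    have hmem : k + m * p ∈ KS p (q+p) := by
      simp only [KS, Finset.mem_Icc]
      have h0 : 0 ≤ m * p := by positivity
      have h1 : m * p ≤ (p:ℤ) * p := mul_le_mul_of_nonneg_right hmp (by omega)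
      have h3 : ((p:ℤ)) * ((q+p : ℕ):ℤ) = (p:ℤ)*q + (p:ℤ)*p := by push_cast; ring
      omega
    have hle := mV_le p (q+p) hp (by omega) hmem
    rw [hshift, hGk] at hle
    have hs : ∑ i ∈ Finset.Ico 1 p, |m - (i : ℤ)| = S0 p := by rw [S0, hm]
    omega
  · -- every window for q+p dominates
    have hub : ∀ k' ∈ KS p (q+p), mV p q + S0 p ≤ G p (q+p) k' := by
      intro k' hk'
      simp only [KS, Finset.mem_Icc] at hk'
      obtain ⟨hk'0, hk'ub⟩ := hk'
      set Q : ℤ := ((q+p : ℕ) : ℤ) with hQ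
      have hQval : Q = (q:ℤ) + p := by rw [hQ]; push_cast; ring
      have hQpos : 0 < Q := by omega
      set i₀ : ℤ := k' / Q with hi₀
      set ρ : ℤ := k' % Q with hρ
      have hdm : Q * i₀ + ρ = k' := Int.mul_ediv_add_emod k' Q
      have hρ0 : 0 ≤ ρ := Int.emod_nonneg k' (by omega)
      have hρub : ρ < Q := Int.emod_lt_of_pos k' hQpos
      have hi₀0 : 0 ≤ i₀ := Int.ediv_nonneg hk'0 (by omega)
      have hi₀ub : i₀ < (p:ℤ) := by
        rw [hi₀, Int.ediv_lt_iff_lt_mul hQpos]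
        have h2 : (p:ℤ) * Q = (p:ℤ)*Q := rfl
        omega
      have hQi : Q * i₀ = (q:ℤ)*i₀ + (p:ℤ)*i₀ := by rw [hQval]; ring
      have hlbq : 0 ≤ (q:ℤ)*i₀ := by positivity
      have hlbp : 0 ≤ (p:ℤ)*i₀ := by positivity
      have hiq_ub : (q:ℤ)*i₀ ≤ (q:ℤ)*((p:ℤ)-1) :=
        mul_le_mul_of_nonneg_left (by omega) (by omega)
      have hip_ub : (p:ℤ)*i₀ ≤ (p:ℤ)*((p:ℤ)-1) :=
        mul_le_mul_of_nonneg_left (by omega) (by omega)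
      have eqq : (q:ℤ)*((p:ℤ)-1) = (p:ℤ)*q - q := by ring
      rcases le_or_gt ρ ((q:ℤ) - 1) with hcase | hcase
      · -- covered case, m = i₀
        set k : ℤ := k' - i₀ * p with hkdef
        have hkval : k = (q:ℤ)*i₀ + ρ := by
          rw [hkdef, ← hdm, hQval]; ring
        have hcond1 : (i₀ - 1) * q ≤ k := by
          have e1 : (i₀ - 1) * q = (q:ℤ)*i₀ - q := by ring
          omega
        have hcond2 : k < (i₀ + 1) * q := by
          have e1 : (i₀ + 1) * q = (q:ℤ)*i₀ + q := by ring
          omega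
        have hshift := G_shift p q hp i₀ k hi₀0 (by omega) hcond1 hcond2
        have hkk' : k + i₀ * p = k' := by rw [hkdef]; ring
        rw [hkk'] at hshift
        have hmem : k ∈ KS p q := by
          simp only [KS, Finset.mem_Icc]
          omega
        have h1 := mV_le p q hp hq hmem
        have h2 := S0_min p i₀
        omega
      · -- gap case, m = i₀ + 1
        set k : ℤ := k' - (i₀ + 1) * p with hkdef
        have hkval : k = (q:ℤ)*i₀ + (ρ - p) := by
          rw [hkdef, ← hdm, hQval]; ring
        have hcond1 : ((i₀ + 1) - 1) * q ≤ k := by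
          have e1 : ((i₀ + 1) - 1) * q = (q:ℤ)*i₀ := by ring
          omega
        have hcond2 : k < ((i₀ + 1) + 1) * q := by
          have e1 : ((i₀ + 1) + 1) * q = (q:ℤ)*i₀ + 2*q := by ring
          omega
        have hshift := G_shift p q hp (i₀ + 1) k (by omega) (by omega) hcond1 hcond2
        have hkk' : k + (i₀ + 1) * p = k' := by rw [hkdef]; ring
        rw [hkk'] at hshift
        have hmem : k ∈ KS p q := by
          simp only [KS, Finset.mem_Icc]
          omega
        have h1 := mV_le p q hp hq hmem
        have h2 := S0_min p (i₀ + 1)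
        omega
    have hne := KS_nonempty p (q+p) hp (by omega : 0 < q + p)
    have hmv : mV p (q+p) = (KS p (q+p)).inf' hne (G p (q+p)) := dif_pos hne
    rw [hmv]
    exact Finset.le_inf' _ _ hub

end SigAux

namespace SigAux

open Classical in
noncomputable def LSet (p q : ℕ) (t : ℝ) : Finset (ℕ × ℕ) :=
  (Finset.Ioo 0 p ×ˢ Finset.Ioo 0 q).filter
    (fun ij => t < (ij.1 : ℝ) / p + (ij.2 : ℝ) / q ∧ (ij.1 : ℝ) / p + (ij.2 : ℝ) / q < t + 1)

lemma latticeCount_eq (p q : ℕ) (t : ℝ) : latticeCount p q t = (LSet p q t).card := by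
  classical
  rw [latticeCount, ← Set.ncard_coe_finset]
  congr 1
  ext ij
  simp only [LSet, Finset.coe_filter, Finset.mem_product, Finset.mem_Ioo, Set.mem_setOf_eq,
    Set.mem_sep_iff, Finset.mem_coe]
  tauto

lemma mem_iff (p q : ℕ) (hp : 0 < p) (hq : 0 < q) (k : ℤ) (i j : ℕ) :
    ((2*(k:ℝ)+1)/(2*(p:ℝ)*(q:ℝ)) < (i:ℝ)/(p:ℝ) + (j:ℝ)/(q:ℝ) ∧
      (i:ℝ)/(p:ℝ) + (j:ℝ)/(q:ℝ) < (2*(k:ℝ)+1)/(2*(p:ℝ)*(q:ℝ)) + 1)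
    ↔ (k < (i:ℤ)*q + (j:ℤ)*p ∧ (i:ℤ)*q + (j:ℤ)*p ≤ k + (p:ℤ)*q) := by
  have hp' : (0:ℝ) < p := by exact_mod_cast hp
  have hq' : (0:ℝ) < q := by exact_mod_cast hq
  have hpq : (0:ℝ) < 2*(p:ℝ)*(q:ℝ) := by positivity
  have hS : (i:ℝ)/(p:ℝ) + (j:ℝ)/(q:ℝ) = (2*((i:ℝ)*q + (j:ℝ)*p)) / (2*(p:ℝ)*(q:ℝ)) := by
    field_simp
  have hone : (2*(k:ℝ)+1)/(2*(p:ℝ)*(q:ℝ)) + 1 = (2*(k:ℝ)+1 + 2*(p:ℝ)*(q:ℝ))/(2*(p:ℝ)*(q:ℝ)) := by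
    field_simp
  rw [hS, hone, div_lt_div_iff_of_pos_right hpq, div_lt_div_iff_of_pos_right hpq]
  constructor
  · rintro ⟨h1, h2⟩
    constructor
    · have : ((2*k+1 : ℤ) : ℝ) < ((2*((i:ℤ)*q + (j:ℤ)*p) : ℤ) : ℝ) := by push_cast; push_cast at h1; linarith
      have := Int.cast_lt.mp this
      omega
    · have : ((2*((i:ℤ)*q + (j:ℤ)*p) : ℤ) : ℝ) < ((2*k+1 + 2*((p:ℤ)*q) : ℤ) : ℝ) := by
        push_cast; push_cast at h2; linarith
      have := Int.cast_lt.mp this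
      omega
  · rintro ⟨h1, h2⟩
    constructor
    · have h1' : ((2*k+1 : ℤ) : ℝ) < ((2*((i:ℤ)*q + (j:ℤ)*p) : ℤ) : ℝ) := by
        exact_mod_cast (by omega : (2*k+1 : ℤ) < 2*((i:ℤ)*q + (j:ℤ)*p))
      push_cast at h1' ⊢; linarith
    · have h2' : ((2*((i:ℤ)*q + (j:ℤ)*p) : ℤ) : ℝ) < ((2*k+1 + 2*((p:ℤ)*q) : ℤ) : ℝ) := by
        exact_mod_cast (by omega : (2*((i:ℤ)*q + (j:ℤ)*p) : ℤ) < 2*k+1 + 2*((p:ℤ)*q))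
      push_cast at h2' ⊢; linarith

end SigAux

namespace SigAux

/-- per-`i` column count -/
lemma cnt_eq (p q : ℕ) (hp : 0 < p) (hq : 0 < q) (k : ℤ) (hk0 : 0 ≤ k) (hk1 : k < (p:ℤ)*q)
    (i : ℕ) (hi1 : 1 ≤ i) (hi2 : i < p) :
    (((Finset.Ioo 0 q).filter
        (fun j : ℕ => k < (i:ℤ)*q + (j:ℤ)*p ∧ (i:ℤ)*q + (j:ℤ)*p ≤ k + (p:ℤ)*q)).card : ℤ)
      = (q:ℤ) - 1 - |2*k + 1 - 2*(i:ℤ)*q| / (2*(p:ℤ)) := by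
  classical
  have hp' : (0:ℤ) < p := by exact_mod_cast hp
  set a : ℤ := k - (i:ℤ)*q with ha
  set d : ℤ := a / (p:ℤ) with hd
  set r : ℤ := a % (p:ℤ) with hr
  have hdm : (p:ℤ) * d + r = a := Int.mul_ediv_add_emod a p
  have hr0 : 0 ≤ r := Int.emod_nonneg a (by omega)
  have hrp : r < (p:ℤ) := Int.emod_lt_of_pos a hp'
  have hiq1 : (i:ℤ)*q ≤ ((p:ℤ)-1)*q := mul_le_mul_of_nonneg_right (by omega) (by omega)
  have hiq0 : (q:ℤ) ≤ (i:ℤ)*q := by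
    have := mul_le_mul_of_nonneg_right (by omega : (1:ℤ) ≤ (i:ℤ)) (by omega : (0:ℤ) ≤ (q:ℤ))
    omega
  have hexp : ((p:ℤ)-1)*q = (p:ℤ)*q - q := by ring
  have hcond : ∀ j : ℕ, j ∈ Finset.Ioo 0 q →
      ((k < (i:ℤ)*q + (j:ℤ)*p ∧ (i:ℤ)*q + (j:ℤ)*p ≤ k + (p:ℤ)*q) ↔
        (d < (j:ℤ) ∧ (j:ℤ) ≤ d + q)) := by
    intro j _
    have hiff1 : d < (j:ℤ) ↔ a < (j:ℤ)*p := by rw [hd]; exact Int.ediv_lt_iff_lt_mul hp'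
    have hiff2 : ((j:ℤ) - q) ≤ d ↔ ((j:ℤ) - q)*p ≤ a := by
      rw [hd]; exact Int.le_ediv_iff_mul_le hp'
    have e : ((j:ℤ) - q)*p = (j:ℤ)*p - (q:ℤ)*(p:ℤ) := by ring
    have e2 : (p:ℤ)*q = (q:ℤ)*(p:ℤ) := by ring
    omega
  rw [Finset.filter_congr hcond]
  have hdlb : -(q:ℤ) ≤ d := by
    rw [hd, Int.le_ediv_iff_mul_le hp']
    have e : (-(q:ℤ))*p = -((q:ℤ)*(p:ℤ)) := by ring
    have e2 : (p:ℤ)*q = (q:ℤ)*(p:ℤ) := by ring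
    omega
  have hdub : d ≤ (q:ℤ) - 1 := by
    have hlt : d < (q:ℤ) := by
      rw [hd, Int.ediv_lt_iff_lt_mul hp']
      have e2 : (p:ℤ)*q = (q:ℤ)*(p:ℤ) := by ring
      omega
    omega
  have hset : (Finset.Ioo 0 q).filter (fun j : ℕ => d < (j:ℤ) ∧ (j:ℤ) ≤ d + (q:ℤ))
      = Finset.Ico (max 1 (d+1)).toNat (min (q:ℤ) (d+q+1)).toNat := by
    ext j
    simp only [Finset.mem_filter, Finset.mem_Ioo, Finset.mem_Ico]
    omega
  rw [hset, Nat.card_Ico]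
  have e2a : 2*k + 1 - 2*(i:ℤ)*q = 2*a + 1 := by rw [ha]; ring
  have hsign1 : 0 ≤ a → 0 ≤ d := fun h => by rw [hd]; exact Int.ediv_nonneg h (by omega)
  have hsign2 : a < 0 → d < 0 := fun h => by rw [hd]; exact Int.ediv_neg_of_neg_of_pos h hp' 
  have hw : |2*k + 1 - 2*(i:ℤ)*q| / (2*(p:ℤ)) = if 0 ≤ a then d else -d-1 := by
    rw [e2a]
    rcases le_or_gt 0 a with hcase | hcase
    · rw [if_pos hcase, abs_of_nonneg (by omega)]
      have e0 : (2*(p:ℤ))*d = 2*((p:ℤ)*d) := by ring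
      have e : 2*a+1 = (2*r+1) + (2*(p:ℤ))*d := by omega
      rw [e, Int.add_mul_ediv_left _ _ (by omega : (2:ℤ)*(p:ℤ) ≠ 0),
        Int.ediv_eq_zero_of_lt (by omega) (by omega)]
      omega
    · rw [if_neg (by omega), abs_of_neg (by omega)]
      have e0 : (2*(p:ℤ))*(-d-1) = -2*((p:ℤ)*d) - 2*(p:ℤ) := by ring
      have e : -(2*a+1) = (2*(p:ℤ) - 2*r - 1) + (2*(p:ℤ))*(-d-1) := by omega
      rw [e, Int.add_mul_ediv_left _ _ (by omega : (2:ℤ)*(p:ℤ) ≠ 0),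
        Int.ediv_eq_zero_of_lt (by omega) (by omega)]
      omega
  rw [hw]
  omega

end SigAux

namespace SigAux

lemma latticeCount_grid (p q : ℕ) (hp : 0 < p) (hq : 0 < q) (k : ℤ)
    (hk0 : 0 ≤ k) (hk1 : k < (p:ℤ)*q) :
    (latticeCount p q ((2*(k:ℝ)+1)/(2*(p:ℝ)*(q:ℝ))) : ℤ)
      = ((p:ℤ)-1)*((q:ℤ)-1) - G p q k := by
  classical
  rw [latticeCount_eq]
  have hfib : (LSet p q ((2*(k:ℝ)+1)/(2*(p:ℝ)*(q:ℝ)))).card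
      = ∑ i ∈ Finset.Ioo 0 p,
          ((Finset.Ioo 0 q).filter
            (fun j : ℕ => k < (i:ℤ)*q + (j:ℤ)*p ∧ (i:ℤ)*q + (j:ℤ)*p ≤ k + (p:ℤ)*q)).card := by
    rw [Finset.card_eq_sum_card_fiberwise
      (f := Prod.fst) (t := Finset.Ioo 0 p)
      (fun x hx => by
        simp only [Finset.mem_coe, LSet, Finset.mem_filter, Finset.mem_product] at hx
        exact hx.1.1)]
    apply Finset.sum_congr rfl
    intro i hi
    apply Finset.card_bij (fun x _ => x.2)
    · intro x hx
      simp only [LSet, Finset.mem_filter, Finset.mem_product, Finset.mem_Ioo] at hx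
      obtain ⟨⟨⟨hi1, hj1⟩, hcond⟩, hfst⟩ := hx
      simp only [Finset.mem_filter, Finset.mem_Ioo]
      subst hfst
      exact ⟨hj1, (mem_iff p q hp hq k x.1 x.2).mp hcond⟩
    · intro x hx y hy hxy
      simp only [Finset.mem_filter] at hx hy
      exact Prod.ext (hx.2.trans hy.2.symm) hxy
    · intro j hj
      simp only [Finset.mem_filter, Finset.mem_Ioo] at hj
      refine ⟨(i, j), ?_, rfl⟩
      simp only [LSet, Finset.mem_filter, Finset.mem_product, Finset.mem_Ioo]
      simp only [Finset.mem_Ioo] at hi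
      exact ⟨⟨⟨hi, hj.1⟩, (mem_iff p q hp hq k i j).mpr hj.2⟩, trivial⟩
  rw [hfib]
  push_cast
  have hIoo : Finset.Ioo 0 p = Finset.Ico 1 p := by
    ext x; simp only [Finset.mem_Ioo, Finset.mem_Ico]; omega
  rw [hIoo]
  rw [Finset.sum_congr rfl (fun i hi => by
    simp only [Finset.mem_Ico] at hi
    exact cnt_eq p q hp hq k hk0 hk1 i hi.1 hi.2)]
  rw [Finset.sum_sub_distrib]
  rw [Finset.sum_const, Nat.card_Ico, nsmul_eq_mul]
  rw [show G p q k = ∑ i ∈ Finset.Ico 1 p, |2 * k + 1 - 2 * (i : ℤ) * (q : ℤ)| / (2 * (p : ℤ)) from rfl]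
  have hc : ((p - 1 : ℕ) : ℤ) = (p:ℤ) - 1 := by omega
  rw [hc]

end SigAux

namespace SigAux

lemma latticeCount_le (p q : ℕ) (hp : 0 < p) (hq : 0 < q) (t : ℝ) (ht : t ∈ Set.Ioo (0:ℝ) 1) :
    ∃ k : ℤ, 0 ≤ k ∧ k < (p:ℤ)*q ∧
      latticeCount p q t ≤ latticeCount p q ((2*(k:ℝ)+1)/(2*(p:ℝ)*(q:ℝ))) := by
  classical
  obtain ⟨ht0, ht1⟩ := ht
  have hp' : (0:ℝ) < p := by exact_mod_cast hp
  have hq' : (0:ℝ) < q := by exact_mod_cast hq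
  have hpqR : (0:ℝ) < (p:ℝ)*(q:ℝ) := by positivity
  set T : ℝ := t * ((p:ℝ)*(q:ℝ)) with hT
  have hT0 : 0 < T := by positivity
  have hTub : T < (p:ℝ)*(q:ℝ) := by
    rw [hT]
    nlinarith
  refine ⟨⌈T⌉ - 1, ?_, ?_, ?_⟩
  · have : 0 < ⌈T⌉ := Int.ceil_pos.mpr hT0
    omega
  · have : ⌈T⌉ ≤ (p:ℤ)*q := by
      apply Int.ceil_le.mpr
      push_cast
      linarith
    omega
  · rw [latticeCount_eq, latticeCount_eq]
    apply Finset.card_le_card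
    intro x hx
    simp only [LSet, Finset.mem_filter, Finset.mem_product, Finset.mem_Ioo] at hx ⊢
    obtain ⟨hmem, hc1, hc2⟩ := hx
    refine ⟨hmem, ?_⟩
    rw [mem_iff p q hp hq (⌈T⌉ - 1) x.1 x.2]
    set n : ℤ := (x.1:ℤ)*q + (x.2:ℤ)*p with hn
    have hSn : ((x.1:ℝ)/(p:ℝ) + (x.2:ℝ)/(q:ℝ)) * ((p:ℝ)*(q:ℝ)) = ((n:ℤ):ℝ) := by
      rw [hn]; push_cast; field_simp; try ring
    constructor
    · have h1 : T < ((n:ℤ):ℝ) := by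
        rw [← hSn, hT]
        nlinarith
      have h2 : ⌈T⌉ ≤ n := Int.ceil_le.mpr (le_of_lt h1)
      omega
    · have h1 : ((n:ℤ):ℝ) < T + (p:ℝ)*(q:ℝ) := by
        rw [← hSn, hT]
        nlinarith
      have h2 : n - (p:ℤ)*q < ⌈T⌉ := by
        apply Int.lt_ceil.mpr
        push_cast
        linarith
      omega

lemma sigmaMax_eq (p q : ℕ) (hp : 0 < p) (hq : 0 < q) :
    sigmaMax p q = ((p:ℤ)-1)*((q:ℤ)-1) - 2 * mV p q := by
  apply IsGreatest.csSup_eq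
  constructor
  · obtain ⟨k, hkmem, hGk⟩ := exists_mV p q hp hq
    simp only [KS, Finset.mem_Icc] at hkmem
    refine ⟨(2*(k:ℝ)+1)/(2*(p:ℝ)*(q:ℝ)), ⟨?_, ?_⟩, ?_⟩
    · apply div_pos
      · have : (0:ℤ) < 2*k+1 := by omega
        have : ((0:ℤ):ℝ) < ((2*k+1:ℤ):ℝ) := by exact_mod_cast this
        push_cast at this
        linarith
      · have hp' : (0:ℝ) < p := by exact_mod_cast hp
        have hq' : (0:ℝ) < q := by exact_mod_cast hq
        positivity
    · rw [div_lt_one (by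
        have hp' : (0:ℝ) < p := by exact_mod_cast hp
        have hq' : (0:ℝ) < q := by exact_mod_cast hq
        positivity)]
      have : (2*k+1:ℤ) < 2*((p:ℤ)*q) := by omega
      have h2 : ((2*k+1:ℤ):ℝ) < ((2*((p:ℤ)*q):ℤ):ℝ) := by exact_mod_cast this
      push_cast at h2
      linarith
    · rw [sigmaT, latticeCount_grid p q hp hq k hkmem.1 (by omega), hGk]
      ring
  · rintro v ⟨t, ht, rfl⟩
    obtain ⟨k, hk0, hk1, hle⟩ := latticeCount_le p q hp hq t ht
    have h2 := latticeCount_grid p q hp hq k hk0 hk1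
    have h3 := mV_le p q hp hq (show k ∈ KS p q by simp only [KS, Finset.mem_Icc]; omega)
    rw [sigmaT]
    have hle' : (latticeCount p q t : ℤ)
        ≤ (latticeCount p q ((2*(k:ℝ)+1)/(2*(p:ℝ)*(q:ℝ))) : ℤ) := by exact_mod_cast hle
    omega

end SigAux

open SigAux in
theorem sigmaMax_add_p (p q : ℕ) (hp : 0 < p) (hpq : p < q) (hco : Nat.Coprime p q) :
    sigmaMax p (q + p) =
      sigmaMax p q + (if Even p then (p : ℤ) ^ 2 / 2 else ((p : ℤ) ^ 2 - 1) / 2) := by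
  have hq : 0 < q := lt_trans hp hpq
  rw [sigmaMax_eq p (q+p) hp (by omega), sigmaMax_eq p q hp hq, mV_shift p q hp hpq]
  have hs := S0_val p hp
  have e : ((p:ℤ)-1)*(((q+p:ℕ):ℤ)-1) = ((p:ℤ)-1)*((q:ℤ)-1) + ((p:ℤ)-1)*(p:ℤ) := by
    push_cast; ring
  rw [e]
  linarith [hs]
end

section
/- Let 0 < p < q be coprime integers. Then there exists a rational number t with 1/2 − 1/q < t ≤ 1/2 such that σ_t(p,q) = σ̂(p,q); in particular the supremum defining σ̂(p,q) is attained in the interval (1/2 − 1/q, 1/2]. -/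
namespace SigmaAux
open Finset

def box (p q : ℕ) : Finset (ℕ × ℕ) := Finset.Ioo 0 p ×ˢ Finset.Ioo 0 q

def cC (p q m : ℕ) : ℕ :=
  ((box p q).filter fun ij => m < ij.1 * q + ij.2 * p ∧ ij.1 * q + ij.2 * p ≤ m + p * q).card

open scoped Classical in
lemma latticeCount_eq (p q : ℕ) (t : ℝ) :
    latticeCount p q t = ((box p q).filter fun ij =>
      t < (ij.1 : ℝ) / p + (ij.2 : ℝ) / q ∧ (ij.1 : ℝ) / p + (ij.2 : ℝ) / q < t + 1).card := by
  rw [latticeCount, ← Set.ncard_coe_finset]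
  congr 1
  ext ij
  simp only [Finset.coe_filter, box, Set.mem_setOf_eq, Finset.mem_product, Finset.mem_Ioo,
    Set.mem_setOf_eq]
  tauto

lemma sum_div (p q i j : ℕ) (hp : 0 < p) (hq : 0 < q) :
    (i : ℝ) / p + (j : ℝ) / q = ((i:ℝ) * q + (j:ℝ) * p) / ((p:ℝ) * q) := by
  have hp' : ((p:ℝ)) ≠ 0 := by positivity
  have hq' : ((q:ℝ)) ≠ 0 := by positivity
  field_simp

lemma cond_iff (p q : ℕ) (hp : 0 < p) (hq : 0 < q) (t : ℝ) (m : ℕ)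
    (h1 : (m : ℝ) < t * (p * q)) (h2 : t * (p * q) < m + 1)
    (ij : ℕ × ℕ) (hij : ij ∈ box p q) :
    (t < (ij.1 : ℝ) / p + (ij.2 : ℝ) / q ∧ (ij.1 : ℝ) / p + (ij.2 : ℝ) / q < t + 1)
      ↔ (m < ij.1 * q + ij.2 * p ∧ ij.1 * q + ij.2 * p ≤ m + p * q) := by
  obtain ⟨i, j⟩ := ij
  simp only [box, Finset.mem_product, Finset.mem_Ioo] at hij
  dsimp only
  have hp' : (0:ℝ) < p := by exact_mod_cast hp
  have hq' : (0:ℝ) < q := by exact_mod_cast hq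
  have hpq' : (0:ℝ) < (p:ℝ) * q := by positivity
  rw [sum_div p q i j hp hq, lt_div_iff₀ hpq', div_lt_iff₀ hpq']
  constructor
  · rintro ⟨ha, hb⟩
    constructor
    · exact_mod_cast lt_trans h1 ha
    · have : (i:ℝ) * q + (j:ℝ) * p < (m:ℝ) + 1 + (p:ℝ) * q := by nlinarith
      have h3 : i * q + j * p < m + 1 + p * q := by exact_mod_cast this
      omega
  · rintro ⟨ha, hb⟩
    have ha' : (m : ℝ) + 1 ≤ (i:ℝ) * q + (j:ℝ) * p := by exact_mod_cast ha
    have hb' : (i:ℝ) * q + (j:ℝ) * p ≤ (m : ℝ) + (p:ℝ) * q := by exact_mod_cast hb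
    constructor
    · linarith
    · nlinarith

lemma latticeCount_eq_cC (p q : ℕ) (hp : 0 < p) (hq : 0 < q) (t : ℝ) (m : ℕ)
    (h1 : (m : ℝ) < t * (p * q)) (h2 : t * (p * q) < m + 1) :
    latticeCount p q t = cC p q m := by
  classical
  rw [latticeCount_eq, cC]
  congr 1
  apply Finset.filter_congr
  intro ij hij
  simpa using cond_iff p q hp hq t m h1 h2 ij hij

lemma latticeCount_le_cC (p q : ℕ) (hp : 0 < p) (hq : 0 < q) (t : ℝ) (ht : 0 < t) :
    latticeCount p q t ≤ cC p q ⌊t * (p * q)⌋₊ := by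
  classical
  rw [latticeCount_eq, cC]
  apply Finset.card_le_card
  intro ij hij
  simp only [Finset.mem_filter] at hij ⊢
  obtain ⟨hmem, hcond⟩ := hij
  refine ⟨hmem, ?_⟩
  obtain ⟨i, j⟩ := ij
  obtain ⟨ha, hb⟩ := hcond
  simp only [box, Finset.mem_product, Finset.mem_Ioo] at hmem
  dsimp only at ha hb ⊢
  have hp' : (0:ℝ) < p := by exact_mod_cast hp
  have hq' : (0:ℝ) < q := by exact_mod_cast hq
  have hpq' : (0:ℝ) < (p:ℝ) * q := by positivity
  rw [sum_div p q i j hp hq, lt_div_iff₀ hpq'] at ha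
  rw [sum_div p q i j hp hq, div_lt_iff₀ hpq'] at hb
  have hfl : (⌊t * ((p:ℝ) * q)⌋₊ : ℝ) ≤ t * ((p:ℝ) * q) := Nat.floor_le (by positivity)
  have hfl2 : t * ((p:ℝ) * q) < (⌊t * ((p:ℝ) * q)⌋₊ : ℝ) + 1 := Nat.lt_floor_add_one _
  constructor
  · have : ((⌊t * ((p:ℝ) * q)⌋₊ : ℕ) : ℝ) < (i:ℝ) * q + (j:ℝ) * p := by linarith
    exact_mod_cast this
  · have : (i:ℝ) * q + (j:ℝ) * p < ((⌊t * ((p:ℝ) * q)⌋₊ : ℕ) : ℝ) + 1 + (p:ℝ) * q := by nlinarith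
    have h3 : i * q + j * p < ⌊t * ((p:ℝ) * q)⌋₊ + 1 + p * q := by exact_mod_cast this
    omega


open Finset

def repC (p q k : ℕ) : ℕ :=
  ((box p q).filter fun ij => ij.1 * q + ij.2 * p = k).card

lemma rep_unique (p q : ℕ) (hco : Nat.Coprime p q) {i j i' j' : ℕ}
    (hi : i < p) (hi' : i' < p)
    (h : i * q + j * p = i' * q + j' * p) : i = i' ∧ j = j' := by
  -- p ∣ (i - i') * q in ℤ
  have key : (p : ℤ) ∣ ((i : ℤ) - i') * q := by
    have : ((i : ℤ) - i') * q = ((j' : ℤ) - j) * p := by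
      have h' : (i : ℤ) * q + j * p = i' * q + j' * p := by exact_mod_cast h
      ring_nf
      linarith [h']
    rw [this]
    exact ⟨(j' : ℤ) - j, by ring⟩
  have hco' : IsCoprime (p : ℤ) (q : ℤ) := by
    rw [Int.isCoprime_iff_gcd_eq_one]
    exact_mod_cast hco
  have hpd : (p : ℤ) ∣ ((i : ℤ) - i') := hco'.dvd_of_dvd_mul_right key
  have hii : i = i' := by
    rcases hpd with ⟨c, hc⟩
    have h1 : (i : ℤ) < p := by exact_mod_cast hi
    have h2 : (i' : ℤ) < p := by exact_mod_cast hi'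
    have h3 : (0:ℤ) ≤ i := by positivity
    have h4 : (0:ℤ) ≤ i' := by positivity
    have hp0 : (0:ℤ) < p := by
      by_contra hcon
      push_neg at hcon
      omega
    have hc0 : c = 0 := by nlinarith
    rw [hc0, mul_zero] at hc
    have : (i:ℤ) = i' := by omega
    exact_mod_cast this
  subst hii
  refine ⟨rfl, ?_⟩
  have hp0 : 0 < p := lt_of_le_of_lt (Nat.zero_le i) hi
  have hjj : j * p = j' * p := by omega
  exact Nat.eq_of_mul_eq_mul_right hp0 hjj

lemma unique_z (p q : ℕ) (hco : Nat.Coprime p q) {i i' : ℕ} (hi : i < p) (hi' : i' < p)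
    {j j' : ℤ} (h : (i:ℤ) * q + j * p = (i':ℤ) * q + j' * p) : i = i' ∧ j = j' := by
  have hp0 : 0 < p := lt_of_le_of_lt (Nat.zero_le i) hi
  have key : (p : ℤ) ∣ ((i : ℤ) - i') * q := by
    have : ((i : ℤ) - i') * q = (j' - j) * p := by ring_nf; linarith [h]
    rw [this]; exact ⟨j' - j, by ring⟩
  have hco' : IsCoprime (p : ℤ) (q : ℤ) := by
    rw [Int.isCoprime_iff_gcd_eq_one]; exact_mod_cast hco
  have hpd : (p : ℤ) ∣ ((i : ℤ) - i') := hco'.dvd_of_dvd_mul_right key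
  have hii : i = i' := by
    rcases hpd with ⟨c, hc⟩
    have h1 : (i : ℤ) < p := by exact_mod_cast hi
    have h2 : (i' : ℤ) < p := by exact_mod_cast hi'
    have h3 : (0:ℤ) ≤ i := by positivity
    have h4 : (0:ℤ) ≤ i' := by positivity
    have hp0' : (0:ℤ) < p := by exact_mod_cast hp0
    have hc0 : c = 0 := by nlinarith
    rw [hc0, mul_zero] at hc
    have : (i:ℤ) = i' := by omega
    exact_mod_cast this
  subst hii
  refine ⟨rfl, ?_⟩
  have hp0' : (0:ℤ) < p := by exact_mod_cast hp0
  have : j * p = j' * p := by linarith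
  exact mul_right_cancel₀ (by positivity) this

lemma repC_le_one (p q : ℕ) (hco : Nat.Coprime p q) (k : ℕ) : repC p q k ≤ 1 := by
  rw [repC, Finset.card_le_one]
  rintro ⟨i, j⟩ ha ⟨i', j'⟩ hb
  simp only [Finset.mem_filter, box, Finset.mem_product, Finset.mem_Ioo] at ha hb
  obtain ⟨⟨⟨_, hi⟩, _, _⟩, he⟩ := ha
  obtain ⟨⟨⟨_, hi'⟩, _, _⟩, he'⟩ := hb
  obtain ⟨h1, h2⟩ := rep_unique p q hco hi hi' (he.trans he'.symm)
  simp [h1, h2]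

lemma repC_pair (p q : ℕ) (hco : Nat.Coprime p q) {k i j : ℕ}
    (h1 : 0 < i) (h2 : i < p) (h3 : 0 < j) (h4 : j < q) (h5 : i * q + j * p = k) :
    repC p q k = 1 := by
  refine le_antisymm (repC_le_one p q hco k) ?_
  rw [repC]
  apply Nat.one_le_iff_ne_zero.mpr
  apply Finset.card_ne_zero_of_mem (a := (i, j))
  simp [box, Finset.mem_filter, Finset.mem_product, Finset.mem_Ioo, h1, h2, h3, h4, h5]

lemma repC_zero (p q : ℕ) {k : ℕ}
    (h : ∀ i j : ℕ, 0 < i → i < p → 0 < j → j < q → i * q + j * p ≠ k) :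
    repC p q k = 0 := by
  rw [repC, Finset.card_eq_zero, Finset.filter_eq_empty_iff]
  rintro ⟨i, j⟩ hm
  simp only [box, Finset.mem_product, Finset.mem_Ioo] at hm
  exact h i j hm.1.1 hm.1.2 hm.2.1 hm.2.2

lemma exists_canonical (p q : ℕ) (hp : 0 < p) (hco : Nat.Coprime p q) (k : ℕ)
    (hpk : ¬ p ∣ k) : ∃ (i : ℕ) (jz : ℤ), 0 < i ∧ i < p ∧ (k:ℤ) = i * q + jz * p := by
  haveI : NeZero p := ⟨by omega⟩
  have hco2 : Nat.Coprime q p := hco.symm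
  set u : (ZMod p)ˣ := ZMod.unitOfCoprime q hco2 with hu
  set a : ZMod p := (k : ZMod p) * (↑u⁻¹ : ZMod p) with ha
  have haval : ((a.val : ℕ) : ZMod p) = a := by
    rw [ZMod.natCast_val, ZMod.cast_id]
  have hmul : ((a.val * q : ℕ) : ZMod p) = (k : ZMod p) := by
    push_cast
    rw [haval, ha]
    have hq' : (↑u : ZMod p) = (q : ZMod p) := ZMod.coe_unitOfCoprime q hco2
    rw [← hq']
    rw [mul_assoc, Units.inv_mul]
    ring
  have hmod : a.val * q ≡ k [MOD p] := (ZMod.natCast_eq_natCast_iff _ _ _).mp hmul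
  obtain ⟨c, hc⟩ := hmod.dvd
  refine ⟨a.val, c, ?_, ZMod.val_lt a, ?_⟩
  · rcases Nat.eq_zero_or_pos a.val with h0 | h1
    · exfalso
      apply hpk
      rw [← ZMod.natCast_eq_zero_iff]
      have : a = 0 := by rw [← haval, h0]; simp
      have hk : (k : ZMod p) = a * (↑u : ZMod p) := by
        rw [ha, mul_assoc, Units.inv_mul, mul_one]
      rw [hk, this, zero_mul]
    · exact h1
  · have : (k : ℤ) - (a.val * q : ℕ) = p * c := hc
    push_cast at this
    linarith


lemma repC_zero_of_dvd (p q : ℕ) (hco : Nat.Coprime p q) (k : ℕ) (hd : p ∣ k ∨ q ∣ k) :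
    repC p q k = 0 := by
  apply repC_zero
  intro i j hi1 hi2 hj1 hj2 he
  rcases hd with hd | hd
  · have h1 : p ∣ i * q := by
      have h2 : p ∣ i * q + j * p := he ▸ hd
      have h3 : p ∣ j * p := dvd_mul_left p j
      have h4 : i * q + j * p - j * p = i * q := by omega
      exact h4 ▸ Nat.dvd_sub h2 h3
    have := Nat.le_of_dvd hi1 (Nat.Coprime.dvd_of_dvd_mul_right hco h1)
    omega
  · have h1 : q ∣ j * p := by
      have h2 : q ∣ i * q + j * p := he ▸ hd
      have h3 : q ∣ i * q := dvd_mul_left q i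
      have h4 : i * q + j * p - i * q = j * p := by omega
      exact h4 ▸ Nat.dvd_sub h2 h3
    have := Nat.le_of_dvd hj1 (Nat.Coprime.dvd_of_dvd_mul_right hco.symm h1)
    omega

lemma rep_add_rep (p q : ℕ) (hp : 0 < p) (hq : 0 < q) (hco : Nat.Coprime p q)
    (k : ℕ) (hk0 : 0 < k) (hk1 : k < p * q) :
    repC p q k + repC p q (k + p * q) = if p ∣ k ∨ q ∣ k then 0 else 1 := by
  have hp' : (0:ℤ) < p := by exact_mod_cast hp
  have hq' : (0:ℤ) < q := by exact_mod_cast hq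
  split_ifs with hd
  · rw [repC_zero_of_dvd p q hco k hd, repC_zero_of_dvd p q hco (k + p*q) ?_]
    · rcases hd with hd | hd
      · exact Or.inl (dvd_add hd (dvd_mul_right p q))
      · exact Or.inr (dvd_add hd (dvd_mul_left q p))
  · push_neg at hd
    obtain ⟨hd1, hd2⟩ := hd
    obtain ⟨i, jz, hi1, hi2, hrep⟩ := exists_canonical p q hp hco k hd1
    have hi1' : (1:ℤ) ≤ i := by exact_mod_cast hi1
    have hi2' : (i:ℤ) < p := by exact_mod_cast hi2
    have hk0' : (0:ℤ) < k := by exact_mod_cast hk0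
    have hk1' : (k:ℤ) < (p:ℤ) * q := by exact_mod_cast hk1
    have hjz0 : jz ≠ 0 := by
      rintro rfl
      apply hd2
      have hzd : (q:ℤ) ∣ (k:ℤ) := ⟨i, by linarith⟩
      exact_mod_cast hzd
    rcases lt_or_gt_of_ne hjz0 with hneg | hpos
    · -- jz ≤ -1 : k + pq is represented, k is not
      have hjz1 : jz ≤ -1 := by omega
      have hge : 1 ≤ jz + q := by nlinarith
      set j : ℕ := (jz + q).toNat with hj
      have hjc : (j:ℤ) = jz + q := Int.toNat_of_nonneg (by omega)
      have hrep2 : repC p q (k + p * q) = 1 := by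
        apply repC_pair p q hco (i := i) (j := j) hi1 hi2
        · omega
        · have : (j:ℤ) < q := by omega
          exact_mod_cast this
        · have : (i:ℤ) * q + (j:ℤ) * p = (k:ℤ) + p * q := by rw [hjc]; linarith [hrep]
          exact_mod_cast this
      have hrep1 : repC p q k = 0 := by
        apply repC_zero
        intro i2 j2 h1 h2 h3 h4 he
        have he' : (i2:ℤ) * q + (j2:ℤ) * p = (i:ℤ) * q + jz * p := by
          rw [← hrep]; exact_mod_cast he
        obtain ⟨hii, hjj⟩ := unique_z p q hco h2 hi2 he'
        have : (1:ℤ) ≤ j2 := by exact_mod_cast h3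
        omega
      rw [hrep1, hrep2]
    · -- jz ≥ 1 : k is represented, k + pq is not
      have hjz1 : 1 ≤ jz := by omega
      have hlt : jz < q := by nlinarith
      set j : ℕ := jz.toNat with hj
      have hjc : (j:ℤ) = jz := Int.toNat_of_nonneg (by omega)
      have hrep1 : repC p q k = 1 := by
        apply repC_pair p q hco (i := i) (j := j) hi1 hi2
        · omega
        · have : (j:ℤ) < q := by omega
          exact_mod_cast this
        · have : (i:ℤ) * q + (j:ℤ) * p = (k:ℤ) := by rw [hjc]; linarith [hrep]
          exact_mod_cast this
      have hrep2 : repC p q (k + p * q) = 0 := by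
        apply repC_zero
        intro i2 j2 h1 h2 h3 h4 he
        have he' : (i2:ℤ) * q + (j2:ℤ) * p = (i:ℤ) * q + (jz + q) * p := by
          have : (i2:ℤ) * q + (j2:ℤ) * p = (k:ℤ) + p * q := by exact_mod_cast he
          rw [this, hrep]; ring
        obtain ⟨hii, hjj⟩ := unique_z p q hco h2 hi2 he'
        have : (j2:ℤ) < q := by exact_mod_cast h4
        omega
      rw [hrep1, hrep2]


lemma card_window (p q a b : ℕ) :
    ((box p q).filter fun ij => a < ij.1 * q + ij.2 * p ∧ ij.1 * q + ij.2 * p ≤ b).card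
      = ∑ k ∈ Finset.Ioc a b, repC p q k := by
  rw [Finset.card_eq_sum_card_fiberwise (f := fun ij => ij.1 * q + ij.2 * p)
    (t := Finset.Ioc a b) (fun x hx => by
      simp only [Finset.mem_coe, Finset.mem_filter] at hx
      simp only [Finset.mem_coe, Finset.mem_Ioc]
      exact hx.2)]
  apply Finset.sum_congr rfl
  intro k hk
  rw [repC, Finset.filter_filter]
  congr 1
  apply Finset.filter_congr
  intro ij _
  simp only [Finset.mem_Ioc] at hk
  constructor
  · rintro ⟨_, h⟩; exact h
  · rintro h; exact ⟨h ▸ ⟨hk.1, hk.2⟩, h⟩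

lemma cC_eq_sum (p q m : ℕ) :
    cC p q m = ∑ k ∈ Finset.Ioc m (m + p * q), repC p q k :=
  card_window p q m (m + p * q)

lemma sum_rep_short (p q m : ℕ) (hp : 0 < p) (hq : 0 < q) :
    ∑ k ∈ Finset.Ioc m (m + p), repC p q k ≤ m / q := by
  rw [← card_window p q m (m + p)]
  have : m / q = (Finset.Icc 1 (m / q)).card := by simp
  rw [this]
  apply Finset.card_le_card_of_injOn (fun ij => ij.1)
  · rintro ⟨i, j⟩ hm
    simp only [Finset.mem_coe, Finset.mem_filter, box, Finset.mem_product, Finset.mem_Ioo] at hm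
    obtain ⟨⟨⟨hi1, hi2⟩, hj1, hj2⟩, hc1, hc2⟩ := hm
    simp only [Finset.mem_coe, Finset.mem_Icc]
    refine ⟨hi1, ?_⟩
    rw [Nat.le_div_iff_mul_le hq]
    have : p ≤ j * p := Nat.le_mul_of_pos_left p hj1
    omega
  · rintro ⟨i, j⟩ hm ⟨i', j'⟩ hm' he
    simp only [Finset.mem_coe, Finset.mem_filter, box, Finset.mem_product, Finset.mem_Ioo] at hm hm'
    simp only at he
    subst he
    obtain ⟨⟨⟨hi1, hi2⟩, hj1, hj2⟩, hc1, hc2⟩ := hm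
    obtain ⟨_, hc1', hc2'⟩ := hm'
    have h1 : j * p < j' * p + p := by omega
    have h2 : j' * p < j * p + p := by omega
    have h3 : j < j' + 1 := by
      have : j * p < (j' + 1) * p := by rw [add_mul, one_mul]; exact h1
      exact Nat.lt_of_mul_lt_mul_right this
    have h4 : j' < j + 1 := by
      have : j' * p < (j + 1) * p := by rw [add_mul, one_mul]; exact h2
      exact Nat.lt_of_mul_lt_mul_right this
    have : j = j' := by omega
    rw [this]

lemma card_dvd_Ioc (d m n : ℕ) (h : m ≤ n) :
    ((Finset.Ioc m n).filter (d ∣ ·)).card = n / d - m / d := by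
  have hu : Finset.Ioc 0 m ∪ Finset.Ioc m n = Finset.Ioc 0 n :=
    Finset.Ioc_union_Ioc_eq_Ioc (Nat.zero_le m) h
  have hdisj : Disjoint ((Finset.Ioc 0 m).filter (d ∣ ·)) ((Finset.Ioc m n).filter (d ∣ ·)) := by
    apply Finset.disjoint_filter_filter
    rw [Finset.disjoint_left]
    intro x hx hx'
    simp only [Finset.mem_Ioc] at hx hx'
    omega
  have hcard : ((Finset.Ioc 0 m).filter (d ∣ ·)).card + ((Finset.Ioc m n).filter (d ∣ ·)).card
      = n / d := by
    rw [← Finset.card_union_of_disjoint hdisj, ← Finset.filter_union, hu]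
    exact Nat.Ioc_filter_dvd_card_eq_div n d
  have h2 : ((Finset.Ioc 0 m).filter (d ∣ ·)).card = m / d := Nat.Ioc_filter_dvd_card_eq_div m d
  omega

lemma cC_step (p q m : ℕ) (hp : 0 < p) (hpq : p < q) (hco : Nat.Coprime p q)
    (hm : 2 * (m + p) ≤ p * q) : cC p q m ≤ cC p q (m + p) := by
  classical
  have hq : 0 < q := lt_trans hp hpq
  set A := ∑ k ∈ Finset.Ioc m (m + p), repC p q k with hA
  set B := ∑ k ∈ Finset.Ioc (m + p) (m + p * q), repC p q k with hB
  set C := ∑ k ∈ Finset.Ioc (m + p * q) (m + p + p * q), repC p q k with hC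
  have hle1 : m ≤ m + p := Nat.le_add_right _ _
  have hle2 : m + p ≤ m + p * q := by
    have := Nat.le_mul_of_pos_right p hq
    omega
  have hle3 : m + p * q ≤ m + p + p * q := by omega
  have hsplit1 : cC p q m = A + B := by
    rw [cC_eq_sum, ← Finset.sum_Ioc_consecutive _ hle1 hle2]
  have hsplit2 : cC p q (m + p) = B + C := by
    rw [cC_eq_sum]
    have : m + p + p * q = m + p + p * q := rfl
    rw [← Finset.sum_Ioc_consecutive _ hle2 hle3]
  -- reindex C
  have hCre : C = ∑ k ∈ Finset.Ioc m (m + p), repC p q (k + p * q) := by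
    rw [hC, ← Finset.map_add_right_Ioc m (m + p) (p * q), Finset.sum_map]
    rfl
  -- A + C = sum of indicator
  have hkrange : ∀ k ∈ Finset.Ioc m (m + p), 0 < k ∧ k < p * q := by
    intro k hk
    simp only [Finset.mem_Ioc] at hk
    constructor
    · omega
    · omega
  have hACS : A + C = ∑ k ∈ Finset.Ioc m (m + p), (if p ∣ k ∨ q ∣ k then 0 else 1) := by
    rw [hA, hCre, ← Finset.sum_add_distrib]
    apply Finset.sum_congr rfl
    intro k hk
    exact rep_add_rep p q hp hq hco k (hkrange k hk).1 (hkrange k hk).2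
  -- indicator sum = card of non-divisible
  have hScard : ∑ k ∈ Finset.Ioc m (m + p), (if p ∣ k ∨ q ∣ k then 0 else 1)
      = ((Finset.Ioc m (m + p)).filter (fun k => ¬(p ∣ k ∨ q ∣ k))).card := by
    rw [Finset.card_filter]
    apply Finset.sum_congr rfl
    intro k _
    by_cases h : p ∣ k ∨ q ∣ k <;> simp [h]
  set F := ((Finset.Ioc m (m + p)).filter (fun k => (p ∣ k ∨ q ∣ k))).card with hF
  have hcardIoc : (Finset.Ioc m (m + p)).card = p := by
    rw [Nat.card_Ioc]; omega
  have hSF : ((Finset.Ioc m (m + p)).filter (fun k => ¬(p ∣ k ∨ q ∣ k))).card + F = p := by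
    have := Finset.card_filter_add_card_filter_not
      (s := Finset.Ioc m (m + p)) (p := fun k => (p ∣ k ∨ q ∣ k))
    rw [hcardIoc] at this
    omega
  have hFle : F ≤ 1 + (((m + p) / q) - m / q) := by
    rw [hF]
    calc F ≤ ((Finset.Ioc m (m + p)).filter (p ∣ ·)).card
        + ((Finset.Ioc m (m + p)).filter (q ∣ ·)).card := by
          rw [hF, Finset.filter_or]
          exact Finset.card_union_le _ _
    _ = 1 + (((m + p) / q) - m / q) := by
        rw [card_dvd_Ioc p m (m+p) hle1, card_dvd_Ioc q m (m+p) hle1]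
        have : (m + p) / p = m / p + 1 := Nat.add_div_right m hp
        omega
  set d := m / q with hd
  set e := ((m + p) / q) - m / q with he
  have hAd : A ≤ d := sum_rep_short p q m hp hq
  have he1 : e ≤ 1 := by
    have h1 : (m + p) / q ≤ (m + q) / q := Nat.div_le_div_right (by omega)
    have h2 : (m + q) / q = m / q + 1 := Nat.add_div_right m hq
    omega
  have hdp : 2 * d < p := by
    have h1 : d * q ≤ m := Nat.div_mul_le_self m q
    have h2 : 2 * (d * q) < p * q := by omega
    have h3 : 2 * d * q < p * q := by rw [mul_assoc]; exact h2
    exact Nat.lt_of_mul_lt_mul_right h3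
  have hecase : e = 0 ∨ 2 * (d + 1) ≤ p := by
    rcases Nat.eq_zero_or_pos e with h0 | h1
    · exact Or.inl h0
    · right
      have h2 : d + 1 ≤ (m + p) / q := by omega
      have h3 : (d + 1) * q ≤ m + p := (Nat.le_div_iff_mul_le hq).mp h2
      have h4 : 2 * ((d + 1) * q) ≤ p * q := by omega
      have h5 : 2 * (d + 1) * q ≤ p * q := by rw [mul_assoc]; exact h4
      exact Nat.le_of_mul_le_mul_right h5 hq
  rw [hsplit1, hsplit2]
  omega


lemma cC_symm (p q m : ℕ) (hp : 0 < p) (hq : 0 < q) (hm : m < p * q) :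
    cC p q (p * q - 1 - m) = cC p q m := by
  classical
  rw [cC, cC]
  apply Finset.card_bij' (i := fun ij _ => (p - ij.1, q - ij.2))
    (j := fun ij _ => (p - ij.1, q - ij.2))
  · rintro ⟨i, j⟩ hij
    simp only [Finset.mem_filter, box, Finset.mem_product, Finset.mem_Ioo] at hij ⊢
    obtain ⟨⟨⟨hi1, hi2⟩, hj1, hj2⟩, hc1, hc2⟩ := hij
    have e1 : (p - i) * q + i * q = p * q := by
      rw [← Nat.add_mul, Nat.sub_add_cancel (le_of_lt hi2)]
    have e2 : (q - j) * p + j * p = q * p := by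
      rw [← Nat.add_mul, Nat.sub_add_cancel (le_of_lt hj2)]
    have e3 : q * p = p * q := Nat.mul_comm q p
    refine ⟨⟨⟨by omega, by omega⟩, by omega, by omega⟩, by omega, by omega⟩
  · rintro ⟨i, j⟩ hij
    simp only [Finset.mem_filter, box, Finset.mem_product, Finset.mem_Ioo] at hij ⊢
    obtain ⟨⟨⟨hi1, hi2⟩, hj1, hj2⟩, hc1, hc2⟩ := hij
    have e1 : (p - i) * q + i * q = p * q := by
      rw [← Nat.add_mul, Nat.sub_add_cancel (le_of_lt hi2)]
    have e2 : (q - j) * p + j * p = q * p := by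
      rw [← Nat.add_mul, Nat.sub_add_cancel (le_of_lt hj2)]
    have e3 : q * p = p * q := Nat.mul_comm q p
    refine ⟨⟨⟨by omega, by omega⟩, by omega, by omega⟩, by omega, by omega⟩
  · rintro ⟨i, j⟩ hij
    simp only [Finset.mem_filter, box, Finset.mem_product, Finset.mem_Ioo] at hij
    obtain ⟨⟨⟨hi1, hi2⟩, hj1, hj2⟩, _, _⟩ := hij
    simp only [Prod.mk.injEq]
    omega
  · rintro ⟨i, j⟩ hij
    simp only [Finset.mem_filter, box, Finset.mem_product, Finset.mem_Ioo] at hij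
    obtain ⟨⟨⟨hi1, hi2⟩, hj1, hj2⟩, _, _⟩ := hij
    simp only [Prod.mk.injEq]
    omega

lemma descent (p q : ℕ) (hp : 0 < p) (hpq : p < q) (hco : Nat.Coprime p q) :
    ∀ N m, p * q - 2 * m ≤ N → 2 * m < p * q →
      ∃ m', (2 * m' < p * q ∧ p * q ≤ 2 * m' + 2 * p) ∧ cC p q m ≤ cC p q m' := by
  intro N
  induction N with
  | zero => intro m h1 h2; omega
  | succ N ih =>
    intro m h1 h2
    by_cases h : p * q ≤ 2 * m + 2 * p
    · exact ⟨m, ⟨h2, h⟩, le_refl _⟩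
    · push_neg at h
      have hstep : cC p q m ≤ cC p q (m + p) := cC_step p q m hp hpq hco (by omega)
      obtain ⟨m', hw, hle⟩ := ih (m + p) (by omega) (by omega)
      exact ⟨m', hw, le_trans hstep hle⟩

lemma reach (p q : ℕ) (hp : 0 < p) (hpq : p < q) (hco : Nat.Coprime p q) (m : ℕ)
    (hm : m < p * q) :
    ∃ m', (2 * m' < p * q ∧ p * q ≤ 2 * m' + 2 * p) ∧ cC p q m ≤ cC p q m' := by
  have hq : 0 < q := lt_trans hp hpq
  by_cases h : 2 * m < p * q
  · exact descent p q hp hpq hco (p * q) m (by omega) h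
  · push_neg at h
    obtain ⟨m', hw, hle⟩ := descent p q hp hpq hco (p * q) (p * q - 1 - m) (by omega) (by omega)
    refine ⟨m', hw, ?_⟩
    rw [← cC_symm p q m hp hq hm]
    exact hle


end SigmaAux

theorem sigmaMax_attained (p q : ℕ) (hp : 0 < p) (hpq : p < q) (hco : Nat.Coprime p q) :
    ∃ t : ℚ, 1 / 2 - 1 / (q : ℚ) < t ∧ t ≤ 1 / 2 ∧ sigmaT p q (t : ℝ) = sigmaMax p q := by
  classical
  have hq : 0 < q := lt_trans hp hpq
  have hpq2 : 2 ≤ p * q := by nlinarith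
  -- the window finset and a maximizer on it
  set W : Finset ℕ := (Finset.range (p * q)).filter
    (fun m => 2 * m < p * q ∧ p * q ≤ 2 * m + 2 * p) with hW
  have hWne : W.Nonempty := by
    obtain ⟨m', ⟨h1, h2⟩, _⟩ := SigmaAux.reach p q hp hpq hco 0 (by omega)
    exact ⟨m', by simp only [hW, Finset.mem_filter, Finset.mem_range]; omega⟩
  obtain ⟨m1, hm1W, hm1max⟩ := Finset.exists_max_image W (SigmaAux.cC p q) hWne
  simp only [hW, Finset.mem_filter, Finset.mem_range] at hm1W
  obtain ⟨hm1lt, hwin1, hwin2⟩ := hm1W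
  -- cC m1 dominates every cC m
  have hmax : ∀ m, m < p * q → SigmaAux.cC p q m ≤ SigmaAux.cC p q m1 := by
    intro m hm
    obtain ⟨m', ⟨h1, h2⟩, hle⟩ := SigmaAux.reach p q hp hpq hco m hm
    have hm'W : m' ∈ W := by
      simp only [hW, Finset.mem_filter, Finset.mem_range]; omega
    exact le_trans hle (hm1max m' hm'W)
  -- the rational point
  set t : ℚ := (2 * (m1:ℚ) + 1) / (2 * (p:ℚ) * q) with ht
  have hp' : (0:ℚ) < p := by exact_mod_cast hp
  have hq' : (0:ℚ) < q := by exact_mod_cast hq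
  have hwin1' : 2 * (m1:ℚ) < (p:ℚ) * q := by exact_mod_cast hwin1
  have hwin2' : (p:ℚ) * q ≤ 2 * (m1:ℚ) + 2 * p := by exact_mod_cast hwin2
  have ht1 : 1 / 2 - 1 / (q:ℚ) < t := by
    have hrw : (1 / 2 - 1 / (q:ℚ)) = ((q:ℚ) - 2) / (2 * q) := by field_simp
    rw [hrw, ht, div_lt_div_iff₀ (by positivity) (by positivity)]
    nlinarith
  have hwin1q : 2 * (m1:ℚ) + 1 ≤ (p:ℚ) * q := by
    have : 2 * m1 + 1 ≤ p * q := hwin1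
    exact_mod_cast this
  have ht2 : t ≤ 1 / 2 := by
    rw [ht, div_le_div_iff₀ (by positivity) (by positivity)]
    nlinarith
  have ht0 : 0 < t := by positivity
  -- real value of t
  have htR : (t : ℝ) = (2 * (m1:ℝ) + 1) / (2 * (p:ℝ) * q) := by
    rw [ht]; push_cast; ring
  have hpR : (0:ℝ) < p := by exact_mod_cast hp
  have hqR : (0:ℝ) < q := by exact_mod_cast hq
  have htpq : (t : ℝ) * ((p:ℝ) * q) = (m1:ℝ) + 1 / 2 := by
    rw [htR]; field_simp
  have hlc : latticeCount p q (t : ℝ) = SigmaAux.cC p q m1 := by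
    apply SigmaAux.latticeCount_eq_cC p q hp hq _ m1
    · rw [htpq]; norm_num
    · rw [htpq]; norm_num
  -- t in (0,1)
  have ht0R : (0:ℝ) < (t:ℝ) := by exact_mod_cast ht0
  have ht1R : (t:ℝ) < 1 := by
    have h := (Rat.cast_le (K := ℝ)).mpr ht2
    norm_num at h
    linarith
  -- upper bound for all values
  have hub : ∀ x ∈ sigmaT p q '' Set.Ioo (0:ℝ) 1, x ≤ sigmaT p q (t:ℝ) := by
    rintro x ⟨s, ⟨hs0, hs1⟩, rfl⟩
    rw [sigmaT, sigmaT, hlc]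
    have hfl : ⌊s * ((p:ℝ) * q)⌋₊ < p * q := by
      rw [Nat.floor_lt (by positivity)]
      have : s * ((p:ℝ) * q) < 1 * ((p:ℝ) * q) := by
        apply mul_lt_mul_of_pos_right hs1 (by positivity)
      push_cast
      linarith
    have h1 : latticeCount p q s ≤ SigmaAux.cC p q ⌊s * ((p:ℝ) * q)⌋₊ :=
      SigmaAux.latticeCount_le_cC p q hp hq s hs0
    have h2 : SigmaAux.cC p q ⌊s * ((p:ℝ) * q)⌋₊ ≤ SigmaAux.cC p q m1 := hmax _ hfl
    have h3 : latticeCount p q s ≤ SigmaAux.cC p q m1 := le_trans h1 h2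
    have h3' : (latticeCount p q s : ℤ) ≤ (SigmaAux.cC p q m1 : ℤ) := by exact_mod_cast h3
    linarith
  have hmem : sigmaT p q (t:ℝ) ∈ sigmaT p q '' Set.Ioo (0:ℝ) 1 :=
    ⟨(t:ℝ), ⟨ht0R, ht1R⟩, rfl⟩
  have hne : (sigmaT p q '' Set.Ioo (0:ℝ) 1).Nonempty := ⟨_, hmem⟩
  have hbdd : BddAbove (sigmaT p q '' Set.Ioo (0:ℝ) 1) := ⟨sigmaT p q (t:ℝ), hub⟩
  refine ⟨t, ht1, ht2, ?_⟩
  rw [sigmaMax]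
  exact le_antisymm (le_csSup hbdd hmem) (csSup_le hne hub)
end

section
/- Let 0 < p < q be coprime integers. For every rational t with 1/q < t ≤ 1/2, one has σ_{t − 1/q}(p,q) ≤ σ_t(p,q). -/
lemma latticeCount_shift_le (p q : ℕ) (hp : 0 < p) (hpq : p < q)
    (s : ℝ) (hs0 : 1 / (q : ℝ) < s) (hs1 : s ≤ 1 / 2) :
    latticeCount p q (s - 1 / q) ≤ latticeCount p q s := by
  have hq : 0 < q := hp.trans hpq
  have hpR : (0:ℝ) < p := by exact_mod_cast hp
  have hqR : (0:ℝ) < q := by exact_mod_cast hq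
  unfold latticeCount
  have hfin : ({ij : ℕ × ℕ | 0 < ij.1 ∧ ij.1 < p ∧ 0 < ij.2 ∧ ij.2 < q ∧
      s < (ij.1 : ℝ) / p + (ij.2 : ℝ) / q ∧ (ij.1 : ℝ) / p + (ij.2 : ℝ) / q < s + 1}).Finite := by
    apply Set.Finite.subset ((Set.finite_Iio p).prod (Set.finite_Iio q))
    rintro ⟨i, j⟩ ⟨-, h2, -, h4, -, -⟩
    exact ⟨h2, h4⟩
  apply Set.ncard_le_ncard_of_injOn
    (fun ij => if ij.2 + 1 < q then (ij.1, ij.2 + 1) else (p - ij.1, 1)) ?_ ?_ hfin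
  · rintro ⟨i, j⟩ ⟨hi0, hip, hj0, hjq, hlo, hhi⟩
    dsimp only at *
    by_cases hc : j + 1 < q
    · rw [if_pos hc]
      have hcast : ((j + 1 : ℕ) : ℝ) / q = (j : ℝ) / q + 1 / q := by
        push_cast; rw [add_div]
      exact ⟨hi0, hip, by omega, hc, by rw [hcast]; linarith, by rw [hcast]; linarith⟩
    · rw [if_neg hc]
      have hj : j + 1 = q := by omega
      have hjR : (j : ℝ) / q = 1 - 1 / q := by
        have h1 : (j : ℝ) = (q : ℝ) - 1 := by
          have : ((j : ℝ) + 1) = q := by exact_mod_cast hj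
          linarith
        rw [h1, sub_div, div_self hqR.ne']
      have hip' : (i : ℝ) / p < s := by rw [hjR] at hhi; linarith
      have hipos : (0:ℝ) < (i : ℝ) / p := div_pos (by exact_mod_cast hi0) hpR
      have hcast : ((p - i : ℕ) : ℝ) / p = 1 - (i : ℝ) / p := by
        rw [Nat.cast_sub hip.le, sub_div, div_self hpR.ne']
      have h1q : (0:ℝ) < 1 / q := by positivity
      exact ⟨by omega, by omega, one_pos, by omega,
        by rw [hcast]; linarith, by rw [hcast]; linarith⟩
  · rintro ⟨i, j⟩ ⟨hi0, hip, hj0, hjq, -, -⟩ ⟨i', j'⟩ ⟨hi0', hip', hj0', hjq', -, -⟩ heq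
    dsimp only at heq
    split_ifs at heq <;> simp only [Prod.mk.injEq] at heq ⊢ <;> omega

theorem sigmaT_shift_le (p q : ℕ) (hp : 0 < p) (hpq : p < q) (hco : Nat.Coprime p q)
    (t : ℚ) (ht0 : 1 / (q : ℚ) < t) (ht1 : t ≤ 1 / 2) :
    sigmaT p q ((t : ℝ) - 1 / (q : ℝ)) ≤ sigmaT p q (t : ℝ) := by
  have h0 : 1 / (q : ℝ) < (t : ℝ) := by
    have := (Rat.cast_lt (K := ℝ)).mpr ht0; push_cast at this; exact this
  have h1 : (t : ℝ) ≤ 1 / 2 := by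
    have := (Rat.cast_le (K := ℝ)).mpr ht1; push_cast at this; exact this
  have key := latticeCount_shift_le p q hp hpq (t : ℝ) h0 h1
  unfold sigmaT
  have : (latticeCount p q ((t : ℝ) - 1 / q) : ℤ) ≤ (latticeCount p q (t : ℝ) : ℤ) := by
    exact_mod_cast key
  linarith
end

section
/- Let n ≥ 1 and let a : ℤ → ℤ be a function with period n (a(i+n) = a(i) for all i), taking only the values +1 and −1, and with ∑_{i=0}^{n−1} a(i) = 0 (a balanced sequence). For k ∈ ℤ define M(k) = max_{k ≤ l < k+n} ∑_{i=k}^{l} a(i). Then for every k ∈ ℤ, M(k) = a(k) + M(k+1). -/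
open Pointwise

theorem balanced_cyclic_max (n : ℕ) (hn : 1 ≤ n) (a : ℤ → ℤ)
    (hper : ∀ i : ℤ, a (i + n) = a i)
    (hval : ∀ i : ℤ, a i = 1 ∨ a i = -1)
    (hbal : ∑ i ∈ Finset.range n, a (i : ℤ) = 0) :
    ∀ k : ℤ,
      sSup {s : ℤ | ∃ l : ℤ, k ≤ l ∧ l < k + n ∧ s = ∑ i ∈ Finset.Icc k l, a i} =
        a k +
          sSup {s : ℤ | ∃ l : ℤ, k + 1 ≤ l ∧ l < k + 1 + n ∧
            s = ∑ i ∈ Finset.Icc (k + 1) l, a i} := by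
  have key : ∀ f : ℕ → ℤ, ∑ i ∈ Finset.range n, f (i + 1)
      = ∑ i ∈ Finset.range n, f i + f n - f 0 := by
    intro f
    have h1 := Finset.sum_range_succ' f n
    have h2 := Finset.sum_range_succ f n
    omega
  have hshift : ∀ m : ℤ, ∑ i ∈ Finset.range n, a (m + i) = 0 := by
    intro m
    induction m using Int.induction_on with
    | zero => simpa using hbal
    | succ j ih =>
        have h1 : ∑ i ∈ Finset.range n, a ((j : ℤ) + 1 + i)
            = ∑ i ∈ Finset.range n, (fun i : ℕ => a ((j : ℤ) + i)) (i + 1) :=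
          Finset.sum_congr rfl fun i _ => congrArg a (by push_cast; ring)
        have h2 := key (fun i : ℕ => a ((j : ℤ) + i))
        have h3 : a ((j : ℤ) + (n : ℕ)) = a ((j : ℤ) + (0 : ℕ)) := by
          rw [hper]; norm_num
        rw [h1, h2]
        omega
    | pred j ih =>
        have h1 : ∑ i ∈ Finset.range n, a (-(j : ℤ) + i)
            = ∑ i ∈ Finset.range n, (fun i : ℕ => a (-(j : ℤ) - 1 + i)) (i + 1) :=
          Finset.sum_congr rfl fun i _ => congrArg a (by push_cast; ring)
        have h2 := key (fun i : ℕ => a (-(j : ℤ) - 1 + i))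
        have h3 : a (-(j : ℤ) - 1 + (n : ℕ)) = a (-(j : ℤ) - 1 + (0 : ℕ)) := by
          rw [hper]; norm_num
        rw [h1, h2] at ih
        omega
  have hIcc : ∀ m : ℤ, ∑ i ∈ Finset.Icc m (m + n - 1), a i = 0 := by
    intro m
    have hmap : Finset.Icc m (m + (n : ℤ) - 1)
        = (Finset.range n).map
          (⟨fun i : ℕ => m + (i : ℤ), fun x y h => by simpa using h⟩ : ℕ ↪ ℤ) := by
      ext x
      simp only [Finset.mem_Icc, Finset.mem_map, Finset.mem_range,
        Function.Embedding.coeFn_mk]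
      constructor
      · intro h
        exact ⟨(x - m).toNat, by omega, by show m + (((x - m).toNat : ℕ) : ℤ) = x; omega⟩
      · rintro ⟨i, hi, rfl⟩
        show m ≤ m + (i : ℤ) ∧ m + (i : ℤ) ≤ m + n - 1
        omega
    rw [hmap, Finset.sum_map]
    exact hshift m
  intro k
  have hz : ∑ i ∈ Finset.Icc (k + 1) (k + n), a i = 0 := by
    have := hIcc (k + 1)
    rwa [show k + 1 + (n : ℤ) - 1 = k + n by ring] at this
  have hins : ∀ l : ℤ, k + 1 ≤ l →
      ∑ i ∈ Finset.Icc k l, a i = a k + ∑ i ∈ Finset.Icc (k + 1) l, a i := by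
    intro l hl
    rw [show Finset.Icc k l = insert k (Finset.Icc (k + 1) l) from by
        ext x; simp only [Finset.mem_Icc, Finset.mem_insert]; omega,
      Finset.sum_insert (by simp)]
  have hset : {s : ℤ | ∃ l : ℤ, k ≤ l ∧ l < k + n ∧ s = ∑ i ∈ Finset.Icc k l, a i}
      = ({a k} : Set ℤ) + {s : ℤ | ∃ l : ℤ, k + 1 ≤ l ∧ l < k + 1 + n ∧
          s = ∑ i ∈ Finset.Icc (k + 1) l, a i} := by
    rw [Set.singleton_add]
    ext s
    simp only [Set.mem_setOf_eq, Set.mem_image]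
    constructor
    · rintro ⟨l, h1, h2, rfl⟩
      by_cases hl : k + 1 ≤ l
      · exact ⟨∑ i ∈ Finset.Icc (k + 1) l, a i, ⟨l, hl, by omega, rfl⟩,
          (hins l hl).symm⟩
      · have hlk : l = k := by omega
        refine ⟨0, ⟨k + n, by omega, by omega, hz.symm⟩, ?_⟩
        rw [hlk]
        simp [Finset.Icc_self]
    · rintro ⟨s', ⟨l, h1, h2, rfl⟩, rfl⟩
      by_cases hl : l < k + n
      · exact ⟨l, by omega, hl, (hins l h1).symm⟩
      · have hlk : l = k + n := by omega
        subst hlk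
        exact ⟨k, by omega, by omega, by simp [Finset.Icc_self, hz]⟩
  have hne : ({s : ℤ | ∃ l : ℤ, k + 1 ≤ l ∧ l < k + 1 + n ∧
      s = ∑ i ∈ Finset.Icc (k + 1) l, a i}).Nonempty :=
    ⟨a (k + 1), k + 1, le_rfl, by omega, by simp [Finset.Icc_self]⟩
  have hfin : ({s : ℤ | ∃ l : ℤ, k + 1 ≤ l ∧ l < k + 1 + n ∧
      s = ∑ i ∈ Finset.Icc (k + 1) l, a i}).Finite := by
    have hsub : {s : ℤ | ∃ l : ℤ, k + 1 ≤ l ∧ l < k + 1 + n ∧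
        s = ∑ i ∈ Finset.Icc (k + 1) l, a i}
        ⊆ (fun l => ∑ i ∈ Finset.Icc (k + 1) l, a i) '' Set.Ico (k + 1) (k + 1 + n) := by
      rintro s ⟨l, h1, h2, rfl⟩
      exact ⟨l, ⟨h1, h2⟩, rfl⟩
    exact ((Set.finite_Ico _ _).image _).subset hsub
  rw [hset, csSup_add (Set.singleton_nonempty _) bddAbove_singleton hne hfin.bddAbove,
    csSup_singleton]
end

section
/- Let 0 < p < q be coprime integers. Then σ̂(p,q) ≤ σ(p,q) + p − 1. -/
lemma tk_ediv_add (p x y : ℤ) (hp : 0 < p) : x / p + y / p ≤ (x + y) / p := by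
  rw [Int.le_ediv_iff_mul_le hp]
  nlinarith [Int.mul_ediv_add_emod x p, Int.mul_ediv_add_emod y p,
    Int.emod_nonneg x hp.ne', Int.emod_nonneg y hp.ne']

lemma tk_foursum (p x y z w : ℤ) (hp : 0 < p) (h : x + y = z + w) :
    x / p + y / p ≤ z / p + w / p + 1 := by
  have ez := Int.mul_ediv_add_emod z p
  have ew := Int.mul_ediv_add_emod w p
  have hz := Int.emod_lt_of_pos z hp
  have hw := Int.emod_lt_of_pos w hp
  by_contra hcon
  push_neg at hcon
  have h2 : z / p + w / p + 2 ≤ x / p + y / p := by omega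
  have h3 : p * (z / p + w / p + 2) ≤ p * (x / p + y / p) :=
    mul_le_mul_of_nonneg_left h2 hp.le
  nlinarith [Int.mul_ediv_add_emod x p, Int.mul_ediv_add_emod y p,
    Int.emod_nonneg x hp.ne', Int.emod_nonneg y hp.ne']

lemma tk_sub_one_ediv (p c : ℤ) (hp : 0 < p) : c / p ≤ (c - 1) / p + 1 := by
  have h : (c - 1 + 1 * p) / p = (c - 1) / p + 1 := Int.add_mul_ediv_right _ _ hp.ne'
  have h2 : c ≤ c - 1 + 1 * p := by omega
  have := Int.ediv_le_ediv hp h2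
  omega

/-- Claim A: the per-`i` jump is at most 1. -/
lemma tk_claimA (p u n m M : ℤ) (hp : 0 < p) (hn : 0 ≤ n) (hnm : n ≤ m) (hm : 2 * m ≤ M) :
    ((m - u) / p - max (n - u) 0 / p).toNat
      ≤ ((M - n - 1 - u) / p - max (M - m - 1 - u) 0 / p).toNat + 1 := by
  have key : (m - u) / p - max (n - u) 0 / p
      ≤ (M - n - 1 - u) / p - max (M - m - 1 - u) 0 / p + 1 := by
    rcases le_or_gt u n with h1 | h1
    · -- case 1 : X1 = n - u
      rw [max_eq_left (by omega : (0:ℤ) ≤ n - u)]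
      rcases le_or_gt 0 (M - m - 1 - u) with h2 | h2
      · rw [max_eq_left h2]
        have := tk_foursum p (m - u) (M - m - 1 - u) (M - n - 1 - u) (n - u) hp (by ring)
        omega
      · -- degenerate: n = m = u, M = 2m
        rw [max_eq_right (by omega : M - m - 1 - u ≤ 0)]
        have hu : u = n ∧ n = m ∧ M = 2 * m := by omega
        obtain ⟨e1, e2, e3⟩ := hu
        have hz : m - u = 0 := by omega
        have hzz : n - u = 0 := by omega
        have hy : M - n - 1 - u = -1 := by omega
        rw [hz, hzz, hy]
        have : (-1 * p) / p = -1 := Int.mul_ediv_cancel _ hp.ne'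
        have h4 : (-1 * p : ℤ) ≤ -1 := by omega
        have := Int.ediv_le_ediv hp h4
        simp only [Int.zero_ediv]
        omega
    · -- case 2 : X1 = 0
      rw [max_eq_right (by omega : n - u ≤ 0)]
      rcases le_or_gt 0 (M - m - 1 - u) with h2 | h2
      · rw [max_eq_left h2]
        have hsum := tk_ediv_add p (M - m - 1 - u) (m - u) hp
        have hmono : (M - m - 1 - u + (m - u)) / p ≤ (M - n - 1 - u) / p :=
          Int.ediv_le_ediv hp (by omega)
        simp only [Int.zero_ediv]
        omega
      · rw [max_eq_right (by omega : M - m - 1 - u ≤ 0)]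
        have h3 : m - u - 1 ≤ M - n - 1 - u := by omega
        have := Int.ediv_le_ediv hp h3
        have := tk_sub_one_ediv p (m - u) hp
        simp only [Int.zero_ediv]
        omega
  omega

/-- Claim B: for `2u ≥ M` the lower count vanishes. -/
lemma tk_claimB (p u n m M : ℤ) (hp : 0 < p) (hnm : n ≤ m) (hm : 2 * m ≤ M)
    (hu : M ≤ 2 * u) : ((m - u) / p - max (n - u) 0 / p).toNat = 0 := by
  have h1 : m - u ≤ 0 := by omega
  have h2 : (m - u) / p ≤ 0 / p := Int.ediv_le_ediv hp h1
  have h3 : (0:ℤ) ≤ max (n - u) 0 / p := Int.ediv_nonneg (le_max_right _ _) hp.le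
  simp only [Int.zero_ediv] at h2
  omega
open Finset

/-- Counting multiples of `p` in an interval `(a, c]`, as `j` ranges over `Ioo 0 q`. -/
lemma tk_count (q : ℕ) {p : ℕ} (hp : 0 < p) (a c : ℤ) (ha : 0 ≤ a)
    (hc : c ≤ ((q:ℤ) - 1) * p) :
    ((Finset.Ioo 0 q).filter (fun j : ℕ => a < (j:ℤ) * p ∧ (j:ℤ) * p ≤ c)).card
      = (c / p - a / p).toNat := by
  have hp' : (0:ℤ) < p := by exact_mod_cast hp
  rw [← Int.card_Ioc]
  refine Finset.card_nbij' (fun j => (j:ℤ)) (fun k => k.toNat) ?_ ?_ ?_ ?_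
  · intro j hj
    simp only [Finset.mem_coe, mem_filter, mem_Ioo] at hj
    obtain ⟨⟨hj0, hjq⟩, h1, h2⟩ := hj
    rw [Finset.mem_coe, Finset.mem_Ioc]
    constructor
    · rw [Int.ediv_lt_iff_lt_mul hp']; exact h1
    · rw [Int.le_ediv_iff_mul_le hp']; exact h2
  · intro k hk
    rw [Finset.mem_coe, Finset.mem_Ioc] at hk
    obtain ⟨hk1, hk2⟩ := hk
    have ha0 : 0 ≤ a / p := Int.ediv_nonneg ha hp'.le
    have hk0 : 1 ≤ k := by omega
    have hcq : c / p ≤ (q:ℤ) - 1 := by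
      calc c / p ≤ (((q:ℤ) - 1) * p) / p := Int.ediv_le_ediv hp' hc
        _ = (q:ℤ) - 1 := Int.mul_ediv_cancel _ hp'.ne'
    have hkq : k ≤ (q:ℤ) - 1 := le_trans hk2 hcq
    simp only [Finset.mem_coe, mem_filter, mem_Ioo]
    have hcast : ((k.toNat : ℕ) : ℤ) = k := Int.toNat_of_nonneg (by omega)
    refine ⟨⟨by omega, by omega⟩, ?_, ?_⟩
    · rw [hcast, ← Int.ediv_lt_iff_lt_mul hp']; exact hk1
    · rw [hcast, ← Int.le_ediv_iff_mul_le hp']; exact hk2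
  · intro j hj; simp
  · intro k hk
    rw [Finset.mem_coe, Finset.mem_Ioc] at hk
    have ha0 : 0 ≤ a / (p:ℤ) := Int.ediv_nonneg ha hp'.le
    exact Int.toNat_of_nonneg (by omega)

/-- The basic two-sided count over pairs. -/
def tcnt (p q a b : ℕ) : ℕ :=
  ((Finset.Ioo 0 p ×ˢ Finset.Ioo 0 q).filter
    (fun ij => a < ij.1 * q + ij.2 * p ∧ ij.1 * q + ij.2 * p ≤ b)).card

lemma tcnt_sum (p q a b : ℕ) :
    tcnt p q a b = ∑ i ∈ Finset.Ioo 0 p,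
      ((Finset.Ioo 0 q).filter (fun j => a < i * q + j * p ∧ i * q + j * p ≤ b)).card := by
  rw [tcnt, Finset.card_filter, Finset.sum_product]
  simp only [Finset.card_filter]

lemma tcnt_split (p q a b c : ℕ) (hab : a ≤ b) (hbc : b ≤ c) :
    tcnt p q a c = tcnt p q a b + tcnt p q b c := by
  classical
  unfold tcnt
  rw [← Finset.card_union_of_disjoint]
  · rw [← Finset.filter_or]
    apply congrArg
    apply Finset.filter_congr
    intro x _
    omega
  · rw [Finset.disjoint_left]
    intro x hx hx'
    simp only [mem_filter] at hx hx'
    omega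

/-- Reflection `(i,j) ↦ (p-i, q-j)` sends `L` to `2pq - L`. -/
lemma tcnt_reflect (p q : ℕ) (P : ℕ → Prop) [DecidablePred P] :
    ((Finset.Ioo 0 p ×ˢ Finset.Ioo 0 q).filter
      (fun ij => P (ij.1 * q + ij.2 * p))).card
    = ((Finset.Ioo 0 p ×ˢ Finset.Ioo 0 q).filter
      (fun ij => P (2 * (p * q) - (ij.1 * q + ij.2 * p)))).card := by
  refine Finset.card_nbij' (fun ij => (p - ij.1, q - ij.2))
    (fun ij => (p - ij.1, q - ij.2)) ?_ ?_ ?_ ?_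
  · intro ij hij
    simp only [Finset.mem_coe, mem_filter, mem_product, mem_Ioo] at hij ⊢
    obtain ⟨⟨⟨hi0, hip⟩, hj0, hjq⟩, hP⟩ := hij
    refine ⟨⟨⟨by omega, by omega⟩, by omega, by omega⟩, ?_⟩
    have e1 : (p - ij.1) * q = p * q - ij.1 * q := Nat.sub_mul _ _ _
    have e2 : (q - ij.2) * p = q * p - ij.2 * p := Nat.sub_mul _ _ _
    have b1 : ij.1 * q ≤ p * q := Nat.mul_le_mul_right _ (by omega)
    have b2 : ij.2 * p ≤ q * p := Nat.mul_le_mul_right _ (by omega)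
    have hqp : q * p = p * q := Nat.mul_comm _ _
    have : 2 * (p * q) - ((p - ij.1) * q + (q - ij.2) * p) = ij.1 * q + ij.2 * p := by
      rw [e1, e2]; omega
    rw [this]; exact hP
  · intro ij hij
    simp only [Finset.mem_coe, mem_filter, mem_product, mem_Ioo] at hij ⊢
    obtain ⟨⟨⟨hi0, hip⟩, hj0, hjq⟩, hP⟩ := hij
    refine ⟨⟨⟨by omega, by omega⟩, by omega, by omega⟩, ?_⟩
    have e1 : (p - ij.1) * q = p * q - ij.1 * q := Nat.sub_mul _ _ _
    have e2 : (q - ij.2) * p = q * p - ij.2 * p := Nat.sub_mul _ _ _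
    have b1 : ij.1 * q ≤ p * q := Nat.mul_le_mul_right _ (by omega)
    have b2 : ij.2 * p ≤ q * p := Nat.mul_le_mul_right _ (by omega)
    have hqp : q * p = p * q := Nat.mul_comm _ _
    have : (p - ij.1) * q + (q - ij.2) * p = 2 * (p * q) - (ij.1 * q + ij.2 * p) := by
      rw [e1, e2]; omega
    rw [this]; exact hP
  · intro ij hij
    simp only [Finset.mem_coe, mem_filter, mem_product, mem_Ioo] at hij
    obtain ⟨⟨⟨hi0, hip⟩, hj0, hjq⟩, _⟩ := hij
    apply Prod.ext <;> simp <;> omega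
  · intro ij hij
    simp only [Finset.mem_coe, mem_filter, mem_product, mem_Ioo] at hij
    obtain ⟨⟨⟨hi0, hip⟩, hj0, hjq⟩, _⟩ := hij
    apply Prod.ext <;> simp <;> omega

/-- Row count as an integer-division expression. -/
lemma tk_row {p q : ℕ} (hp : 0 < p) (i a b : ℕ)
    (hb : (b:ℤ) - (i:ℤ) * q ≤ ((q:ℤ) - 1) * p) :
    ((Finset.Ioo 0 q).filter (fun j : ℕ => a < i * q + j * p ∧ i * q + j * p ≤ b)).card
      = (((b:ℤ) - (i:ℤ) * q) / p - max ((a:ℤ) - (i:ℤ) * q) 0 / p).toNat := by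
  rw [← tk_count q hp (max ((a:ℤ) - (i:ℤ) * q) 0) ((b:ℤ) - (i:ℤ) * q) (le_max_right _ _) hb]
  apply congrArg
  apply Finset.filter_congr
  intro j hj
  simp only [mem_Ioo] at hj
  have hj1 : 1 ≤ j := hj.1
  have hpj : (p:ℤ) ≤ (j:ℤ) * p := by
    have : (1:ℤ) ≤ (j:ℤ) := by exact_mod_cast hj1
    nlinarith [show (0:ℤ) < (p:ℤ) from by exact_mod_cast hp]
  have e1 : ((i * q + j * p : ℕ) : ℤ) = (i:ℤ) * q + (j:ℤ) * p := by push_cast; ring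
  rcases max_cases ((a:ℤ) - (i:ℤ) * q) (0:ℤ) with ⟨hmax, hcase⟩ | ⟨hmax, hcase⟩ <;>
    rw [hmax] <;> constructor <;> intro hcond <;> omega

set_option maxHeartbeats 2000000 in
/-- Core inequality: `2·g(n) ≤ 2·g(m) + (p-1)` for `n ≤ m`, `2m ≤ pq`. -/
lemma tk_core {p q : ℕ} (hp : 0 < p) (hq : p < q) (n m : ℕ) (hnm : n ≤ m)
    (hm : 2 * m ≤ p * q) :
    2 * tcnt p q n (n + p * q) ≤ 2 * tcnt p q m (m + p * q) + (p - 1) := by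
  have hq1 : 0 < q := by omega
  have hM : 2 ≤ p * q := by nlinarith
  have hmM : m + 1 ≤ p * q := by omega
  -- splittings
  have split1 : tcnt p q n (n + p * q) = tcnt p q n m + tcnt p q m (n + p * q) :=
    tcnt_split p q n m (n + p * q) hnm (by omega)
  have split2 : tcnt p q m (m + p * q)
      = tcnt p q m (n + p * q) + tcnt p q (n + p * q) (m + p * q) :=
    tcnt_split p q m (n + p * q) (m + p * q) (by omega) (by omega)
  -- reflection
  have refl1 : tcnt p q (n + p * q) (m + p * q) = tcnt p q (p * q - m - 1) (p * q - n - 1) := by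
    unfold tcnt
    refine (tcnt_reflect p q (fun l => n + p * q < l ∧ l ≤ m + p * q)).trans ?_
    apply congrArg
    apply Finset.filter_congr
    intro ij hij
    simp only [mem_product, mem_Ioo] at hij
    obtain ⟨⟨hi0, hip⟩, hj0, hjq⟩ := hij
    have b1 : ij.1 * q + q ≤ p * q := by
      have h := mul_le_mul_left (show ij.1 + 1 ≤ p by omega) q
      rwa [Nat.succ_mul] at h
    have b2 : ij.2 * p + p ≤ q * p := by
      have h := mul_le_mul_left (show ij.2 + 1 ≤ q by omega) p
      rwa [Nat.succ_mul] at h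
    have hqp : q * p = p * q := Nat.mul_comm _ _
    omega
  -- row sums
  have sum1 := tcnt_sum p q n m
  have sum2 := tcnt_sum p q (p * q - m - 1) (p * q - n - 1)
  -- compare rows
  have hrow : ∀ i ∈ Finset.Ioo 0 p,
      ((Finset.Ioo 0 q).filter (fun j : ℕ => n < i * q + j * p ∧ i * q + j * p ≤ m)).card
      ≤ ((Finset.Ioo 0 q).filter (fun j : ℕ =>
            p * q - m - 1 < i * q + j * p ∧ i * q + j * p ≤ p * q - n - 1)).card
        + (if 2 * i < p then 1 else 0) := by
    intro i hi
    simp only [mem_Ioo] at hi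
    have hppos : (0:ℤ) < (p:ℤ) := by exact_mod_cast hp
    have hqpos : (0:ℤ) < (q:ℤ) := by exact_mod_cast hq1
    have hple : (p:ℤ) < (q:ℤ) := by exact_mod_cast hq
    have hiq : (q:ℤ) ≤ (i:ℤ) * q := by
      have : (1:ℤ) ≤ (i:ℤ) := by exact_mod_cast hi.1
      nlinarith
    have hcM : ((p * q : ℕ) : ℤ) = (p:ℤ) * q := by push_cast; ring
    have hm' : 2 * (m:ℤ) ≤ (p:ℤ) * q := by
      have : ((2 * m : ℕ) : ℤ) ≤ ((p * q : ℕ) : ℤ) := by exact_mod_cast hm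
      push_cast at this
      linarith
    have hnm' : (n:ℤ) ≤ (m:ℤ) := by exact_mod_cast hnm
    have hb1 : (m:ℤ) - (i:ℤ) * q ≤ ((q:ℤ) - 1) * p := by nlinarith
    have e4 : ((p * q - n - 1 : ℕ) : ℤ) = ((p * q : ℕ) : ℤ) - n - 1 := by omega
    have e5 : ((p * q - m - 1 : ℕ) : ℤ) = ((p * q : ℕ) : ℤ) - m - 1 := by omega
    have hb2 : ((p * q - n - 1 : ℕ):ℤ) - (i:ℤ) * q ≤ ((q:ℤ) - 1) * p := by
      rw [e4, hcM]; nlinarith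
    rw [tk_row hp i n m hb1, tk_row hp i (p * q - m - 1) (p * q - n - 1) hb2, e4, e5]
    rcases lt_or_ge (2 * i) p with hcase | hcase
    · simp only [if_pos hcase]
      exact tk_claimA (p:ℤ) ((i:ℤ)*q) (n:ℤ) (m:ℤ) (((p * q : ℕ)):ℤ) hppos
        (by exact_mod_cast Nat.zero_le n) hnm'
        (by rw [hcM]; linarith)
    · simp only [if_neg (not_lt.mpr hcase)]
      have h2u : (((p * q : ℕ)):ℤ) ≤ 2 * ((i:ℤ) * q) := by
        have h1 : p * q ≤ (2 * i) * q := Nat.mul_le_mul_right _ hcase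
        have h2 : ((p * q : ℕ) : ℤ) ≤ (((2 * i) * q : ℕ) : ℤ) := by exact_mod_cast h1
        push_cast at h2
        linarith
      rw [tk_claimB (p:ℤ) ((i:ℤ)*q) (n:ℤ) (m:ℤ) (((p * q : ℕ)):ℤ) hppos hnm'
        (by rw [hcM]; linarith) h2u]
      omega
  have hsum := Finset.sum_le_sum hrow
  rw [Finset.sum_add_distrib] at hsum
  have hcard : (∑ i ∈ Finset.Ioo 0 p, if 2 * i < p then 1 else 0)
      = ((Finset.Ioo 0 p).filter (fun i => 2 * i < p)).card :=
    (Finset.card_filter _ _).symm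
  have hfe : (Finset.Ioo 0 p).filter (fun i => 2 * i < p) = Finset.Ioo 0 ((p+1)/2) := by
    ext x
    simp only [mem_filter, mem_Ioo]
    omega
  have hsmall : 2 * ((Finset.Ioo 0 p).filter (fun i => 2 * i < p)).card ≤ p - 1 := by
    rw [hfe, Nat.card_Ioo]
    omega
  omega
lemma tk_x_eq (p q i j : ℕ) (hp : 0 < p) (hq : 0 < q) :
    (i : ℝ) / p + (j : ℝ) / q = ((i * q + j * p : ℕ) : ℝ) / ((p * q : ℕ) : ℝ) := by
  have hp' : ((p:ℝ)) ≠ 0 := by positivity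
  have hq' : ((q:ℝ)) ≠ 0 := by positivity
  push_cast
  field_simp

lemma tk_bridge_le (p q : ℕ) (hp : 0 < p) (hq : 0 < q) (t : ℝ) (ht : 0 < t) (ht1 : t < 1) :
    latticeCount p q t
      ≤ tcnt p q (⌊t * ((p * q : ℕ) : ℝ)⌋.toNat) (⌊t * ((p * q : ℕ) : ℝ)⌋.toNat + p * q) := by
  set n : ℕ := (⌊t * ((p * q : ℕ) : ℝ)⌋).toNat with hn
  have hMpos : (0:ℝ) < ((p * q : ℕ) : ℝ) := by
    have : 0 < p * q := Nat.mul_pos hp hq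
    exact_mod_cast this
  have hfl : ((n : ℤ) : ℤ) = ⌊t * ((p * q : ℕ) : ℝ)⌋ := by
    rw [hn]
    exact Int.toNat_of_nonneg (Int.floor_nonneg.mpr (by positivity))
  rw [latticeCount]
  have hsub : {ij : ℕ × ℕ | 0 < ij.1 ∧ ij.1 < p ∧ 0 < ij.2 ∧ ij.2 < q ∧
      t < (ij.1 : ℝ) / p + (ij.2 : ℝ) / q ∧ (ij.1 : ℝ) / p + (ij.2 : ℝ) / q < t + 1}
      ⊆ ↑((Finset.Ioo 0 p ×ˢ Finset.Ioo 0 q).filter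
        (fun ij => n < ij.1 * q + ij.2 * p ∧ ij.1 * q + ij.2 * p ≤ n + p * q)) := by
    rintro ⟨i, j⟩ ⟨hi0, hip, hj0, hjq, hlo, hhi⟩
    simp only [Finset.coe_filter, Set.mem_setOf_eq, Finset.mem_product, Finset.mem_Ioo]
    refine ⟨⟨⟨hi0, hip⟩, hj0, hjq⟩, ?_, ?_⟩
    · -- lower bound
      rw [tk_x_eq p q i j hp hq, lt_div_iff₀ hMpos] at hlo
      have h1 : ⌊t * ((p * q : ℕ) : ℝ)⌋ < ((i * q + j * p : ℕ) : ℤ) := by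
        apply Int.floor_lt.mpr
        push_cast
        exact_mod_cast (by linarith [hlo] : t * ((p * q : ℕ) : ℝ) < ((i * q + j * p : ℕ) : ℝ))
      omega
    · -- upper bound
      rw [tk_x_eq p q i j hp hq, div_lt_iff₀ hMpos] at hhi
      have h2 : ((i * q + j * p : ℕ) : ℤ) - ((p * q : ℕ) : ℤ) ≤ ⌊t * ((p * q : ℕ) : ℝ)⌋ := by
        apply Int.le_floor.mpr
        push_cast
        have : ((i * q + j * p : ℕ) : ℝ) < t * ((p * q : ℕ) : ℝ) + ((p * q : ℕ) : ℝ) := by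
          push_cast at hhi ⊢
          nlinarith
        push_cast at this
        linarith
      omega
  calc Set.ncard _ ≤ Set.ncard (↑((Finset.Ioo 0 p ×ˢ Finset.Ioo 0 q).filter
        (fun ij => n < ij.1 * q + ij.2 * p ∧ ij.1 * q + ij.2 * p ≤ n + p * q)) : Set (ℕ × ℕ)) :=
      Set.ncard_le_ncard hsub (Finset.finite_toSet _)
    _ = tcnt p q n (n + p * q) := by rw [Set.ncard_coe_finset]; rfl

lemma tk_half_dvd {a i : ℕ} (hb : a ∣ 2 * i) (hi0 : 0 < i) (hip : i < a) : 2 * i = a := by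
  obtain ⟨k, hk⟩ := hb
  have hk0 : k ≠ 0 := by intro h0; rw [h0, mul_zero] at hk; omega
  have hlt : a * k < a * 2 := by omega
  have hk2 : k < 2 := Nat.lt_of_mul_lt_mul_left hlt
  have hk1 : k = 1 := by omega
  rw [hk1, mul_one] at hk
  exact hk

lemma tk_no_three_half (p q i j : ℕ) (hco : Nat.Coprime p q) (hi0 : 0 < i) (hip : i < p)
    (hj0 : 0 < j) (hjq' : j < q) : 2 * (i * q + j * p) ≠ 3 * (p * q) := by
  intro h
  have h1 : 2 * (i * q) = 3 * (p * q) - 2 * (j * p) := by omega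
  have hd1 : p ∣ 2 * (i * q) := by
    rw [h1]
    exact Nat.dvd_sub ⟨3 * q, by ring⟩ ⟨2 * j, by ring⟩
  have hpi : p ∣ 2 * i := hco.dvd_of_dvd_mul_right (by rw [mul_assoc]; exact hd1)
  have h2 : 2 * (j * p) = 3 * (p * q) - 2 * (i * q) := by omega
  have hd2 : q ∣ 2 * (j * p) := by
    rw [h2]
    exact Nat.dvd_sub ⟨3 * p, by ring⟩ ⟨2 * i, by ring⟩
  have hqj : q ∣ 2 * j := hco.symm.dvd_of_dvd_mul_right (by rw [mul_assoc]; exact hd2)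
  have hip2 : 2 * i = p := tk_half_dvd hpi hi0 hip
  have hjq2 : 2 * j = q := tk_half_dvd hqj hj0 hjq'
  have h2d : (2:ℕ) ∣ Nat.gcd p q := Nat.dvd_gcd ⟨i, hip2.symm⟩ ⟨j, hjq2.symm⟩
  have hg : Nat.gcd p q = 1 := hco
  rw [hg] at h2d
  omega

lemma tk_bridge_half (p q : ℕ) (hp : 0 < p) (hpq : p < q) (hco : Nat.Coprime p q) :
    tcnt p q (p * q / 2) (p * q / 2 + p * q) ≤ latticeCount p q (1 / 2) := by
  have hq : 0 < q := by omega
  have hMpos : (0:ℝ) < ((p * q : ℕ) : ℝ) := by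
    have : 0 < p * q := Nat.mul_pos hp hq
    exact_mod_cast this
  rw [latticeCount, tcnt, ← Set.ncard_coe_finset]
  apply Set.ncard_le_ncard
  · rintro ⟨i, j⟩ hij
    simp only [Finset.coe_filter, Set.mem_setOf_eq, Finset.mem_product, Finset.mem_Ioo] at hij
    obtain ⟨⟨⟨hi0, hip⟩, hj0, hjq⟩, hlo, hhi⟩ := hij
    have hL3 : 2 * (i * q + j * p) ≠ 3 * (p * q) := tk_no_three_half p q i j hco hi0 hip hj0 hjq
    refine ⟨hi0, hip, hj0, hjq, ?_, ?_⟩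
    · rw [tk_x_eq p q i j hp hq, lt_div_iff₀ hMpos]
      have : p * q + 1 ≤ 2 * (i * q + j * p) := by omega
      have hr : ((p * q : ℕ) : ℝ) < 2 * ((i * q + j * p : ℕ) : ℝ) := by exact_mod_cast (by omega : p * q < 2 * (i * q + j * p))
      linarith
    · rw [tk_x_eq p q i j hp hq, div_lt_iff₀ hMpos]
      have h3 : 2 * (i * q + j * p) < 3 * (p * q) := by omega
      have hr : 2 * ((i * q + j * p : ℕ) : ℝ) < 3 * ((p * q : ℕ) : ℝ) := by exact_mod_cast h3
      linarith
  · -- finiteness of the lattice set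
    apply Set.Finite.subset ((Finset.Ioo 0 p ×ˢ Finset.Ioo 0 q) : Finset (ℕ × ℕ)).finite_toSet
    rintro ⟨i, j⟩ ⟨hi0, hip, hj0, hjq, _, _⟩
    simp only [Finset.coe_product, Set.mem_prod, Finset.mem_coe, Finset.mem_Ioo]
    exact ⟨⟨hi0, hip⟩, hj0, hjq⟩

lemma tk_g_reflect (p q n : ℕ) (hq0 : 0 < q) (hn : n + 1 ≤ p * q) :
    tcnt p q n (n + p * q) = tcnt p q (p * q - n - 1) (p * q - n - 1 + p * q) := by
  unfold tcnt
  refine (tcnt_reflect p q (fun l => n < l ∧ l ≤ n + p * q)).trans ?_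
  apply congrArg
  apply Finset.filter_congr
  intro ij hij
  simp only [Finset.mem_product, Finset.mem_Ioo] at hij
  obtain ⟨⟨hi0, hip⟩, hj0, hjq⟩ := hij
  have b1 : ij.1 * q + q ≤ p * q := by
    have h := mul_le_mul_left (show ij.1 + 1 ≤ p by omega) q
    rwa [Nat.succ_mul] at h
  have b2 : ij.2 * p + p ≤ q * p := by
    have h := mul_le_mul_left (show ij.2 + 1 ≤ q by omega) p
    rwa [Nat.succ_mul] at h
  have hqp : q * p = p * q := Nat.mul_comm _ _
  omega

theorem sigmaMax_le (p q : ℕ) (hp : 0 < p) (hpq : p < q) (hco : Nat.Coprime p q) :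
    sigmaMax p q ≤ sigmaClassical p q + p - 1 := by
  have hq : 0 < q := by omega
  have hMpos : 0 < p * q := Nat.mul_pos hp hq
  have key : ∀ t, t ∈ Set.Ioo (0:ℝ) 1 → sigmaT p q t ≤ sigmaClassical p q + (p:ℤ) - 1 := by
    intro t ht
    obtain ⟨ht0, ht1⟩ := ht
    set n : ℕ := (⌊t * ((p * q : ℕ) : ℝ)⌋).toNat with hndef
    have h1 : latticeCount p q t ≤ tcnt p q n (n + p * q) := tk_bridge_le p q hp hq t ht0 ht1
    have hMr : (0:ℝ) < ((p * q : ℕ) : ℝ) := by exact_mod_cast hMpos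
    have hnM : n + 1 ≤ p * q := by
      have hfl : ⌊t * ((p * q : ℕ) : ℝ)⌋ < ((p * q : ℕ) : ℤ) := by
        apply Int.floor_lt.mpr
        have : t * ((p * q : ℕ) : ℝ) < 1 * ((p * q : ℕ) : ℝ) :=
          mul_lt_mul_of_pos_right ht1 hMr
        rw [one_mul] at this
        exact_mod_cast this
      omega
    have h2 : 2 * tcnt p q n (n + p * q)
        ≤ 2 * tcnt p q (p * q / 2) (p * q / 2 + p * q) + (p - 1) := by
      rcases le_or_gt n (p * q / 2) with hc | hc
      · exact tk_core hp hpq n (p * q / 2) hc (by omega)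
      · rw [tk_g_reflect p q n hq hnM]
        exact tk_core hp hpq _ (p * q / 2) (by omega) (by omega)
    have h3 := tk_bridge_half p q hp hpq hco
    have h6 : 2 * (latticeCount p q t : ℤ) ≤ 2 * (latticeCount p q (1/2) : ℤ) + (p:ℤ) - 1 := by
      omega
    rw [sigmaT, sigmaClassical, sigmaT]
    linarith
  apply csSup_le
  · exact ⟨sigmaT p q (1/2), Set.mem_image_of_mem _ (by constructor <;> norm_num)⟩
  · rintro x ⟨t, ht, rfl⟩
    exact key t ht
end

section
/- Let 0 < p < q be coprime integers with p even. Then σ̂(p,q) ≤ σ(p,q) + p − 2. -/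
open Finset

/-! ### Auxiliary combinatorics -/

/-- pairs (i,j), 0<i<p, 0<j<q, with lo ≤ i*q+j*p ≤ hi -/
def Gw (p q lo hi : ℕ) : Finset (ℕ × ℕ) :=
  ((Finset.Ioo 0 p) ×ˢ (Finset.Ioo 0 q)).filter
    (fun ij => lo ≤ ij.1 * q + ij.2 * p ∧ ij.1 * q + ij.2 * p ≤ hi)

lemma mem_Gw {p q lo hi : ℕ} {ij : ℕ × ℕ} :
    ij ∈ Gw p q lo hi ↔ 0 < ij.1 ∧ ij.1 < p ∧ 0 < ij.2 ∧ ij.2 < q ∧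
      lo ≤ ij.1 * q + ij.2 * p ∧ ij.1 * q + ij.2 * p ≤ hi := by
  simp [Gw, Finset.mem_filter, Finset.mem_product, and_assoc]

lemma core (P2 q n M : ℕ) (hP2 : 0 < P2) (hq : 0 < q) (hM : M = P2 * q) (hn : n ≤ M) :
    (Gw (2 * P2) q (M - n) (M - 1)).card ≤
      (Gw (2 * P2) q (M + 1) (M + n)).card + (P2 - 1) := by
  set p := 2 * P2 with hp
  have hp0 : 0 < p := by omega
  have hM1 : 1 ≤ M := by
    rw [hM]; exact Nat.mul_pos hP2 hq
  -- L side
  have hLfib : ∀ ij ∈ Gw p q (M - n) (M - 1), ij.1 ∈ Finset.Ioo 0 P2 := by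
    rintro ⟨i, j⟩ hij
    rw [mem_Gw] at hij
    obtain ⟨hi0, hip, hj0, hjq, hlo, hhi⟩ := hij
    simp only [Finset.mem_Ioo]
    refine ⟨hi0, ?_⟩
    by_contra hle
    push_neg at hle
    have h1 : P2 * q ≤ i * q := Nat.mul_le_mul_right q hle
    have h2 : p ≤ j * p := Nat.le_mul_of_pos_left p hj0
    simp only at hhi
    omega
  have hL : (Gw p q (M - n) (M - 1)).card ≤ (P2 - 1) * ((n - 1) / p + 1) := by
    rw [Finset.card_eq_sum_card_fiberwise hLfib]
    have hbound : ∀ i ∈ Finset.Ioo 0 P2,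
        ((Gw p q (M - n) (M - 1)).filter (fun ij => ij.1 = i)).card ≤ (n - 1) / p + 1 := by
      intro i _
      set fib := (Gw p q (M - n) (M - 1)).filter (fun ij => ij.1 = i) with hfib
      rcases Finset.eq_empty_or_nonempty fib with he | hne
      · simp [he]
      · have hne' : (fib.image Prod.snd).Nonempty := hne.image _
        obtain ⟨jm, hjm⟩ : ∃ jm, jm = (fib.image Prod.snd).min' hne' := ⟨_, rfl⟩
        have hjm_mem : jm ∈ fib.image Prod.snd := hjm ▸ Finset.min'_mem _ hne'
        obtain ⟨ij0, hij0, hsnd0⟩ := Finset.mem_image.mp hjm_mem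
        have hij0' := Finset.mem_filter.mp hij0
        have hfst0 : ij0.1 = i := hij0'.2
        have hkm : M - n ≤ i * q + jm * p := by
          have h := (mem_Gw.mp hij0'.1).2.2.2.2.1
          rwa [hfst0, hsnd0] at h
        calc fib.card ≤ (Finset.Icc jm (jm + (n - 1) / p)).card := by
              apply Finset.card_le_card_of_injOn (fun ij => ij.2)
              · rintro ⟨i', j⟩ hijf
                have hijf' := Finset.mem_filter.mp hijf
                have hfst : i' = i := hijf'.2
                have hk : i * q + j * p ≤ M - 1 := by
                  have h := (mem_Gw.mp hijf'.1).2.2.2.2.2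
                  simp only at h
                  rwa [hfst] at h
                have hge : jm ≤ j := hjm ▸ Finset.min'_le _ _ (Finset.mem_image.mpr ⟨_, hijf, rfl⟩)
                have hsm : (j - jm) * p = j * p - jm * p := Nat.sub_mul j jm p
                have hkey : (j - jm) * p ≤ n - 1 := by omega
                have hjd : j - jm ≤ (n - 1) / p := (Nat.le_div_iff_mul_le hp0).mpr hkey
                simp only [Finset.mem_coe, Finset.mem_Icc]
                omega
              · rintro ⟨a1, a2⟩ ha ⟨b1, b2⟩ hb hab
                have ha' := (Finset.mem_filter.mp ha).2
                have hb' := (Finset.mem_filter.mp hb).2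
                simp only at ha' hb' hab
                simp [Prod.ext_iff, ha', hb', hab]
          _ = (n - 1) / p + 1 := by rw [Nat.card_Icc]; generalize (n - 1) / p = D; omega
    calc ∑ i ∈ Finset.Ioo 0 P2,
          ((Gw p q (M - n) (M - 1)).filter (fun ij => ij.1 = i)).card
        ≤ ∑ i ∈ Finset.Ioo 0 P2, ((n - 1) / p + 1) := Finset.sum_le_sum hbound
      _ = (P2 - 1) * ((n - 1) / p + 1) := by
          rw [Finset.sum_const, Nat.card_Ioo, smul_eq_mul, Nat.sub_zero]
  -- R side
  have hR : P2 * (n / p) ≤ (Gw p q (M + 1) (M + n)).card := by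
    have hinj := Finset.card_le_card_of_injOn
      (f := fun im : ℕ × ℕ => (im.1, (P2 - im.1) * q / p + im.2))
      (s := (Finset.Icc 1 P2) ×ˢ (Finset.Icc 1 (n / p)))
      (t := Gw p q (M + 1) (M + n))
      ?maps ?inj
    · calc P2 * (n / p) = ((Finset.Icc 1 P2) ×ˢ (Finset.Icc 1 (n / p))).card := by
            rw [Finset.card_product, Nat.card_Icc, Nat.card_Icc]
            simp
          _ ≤ _ := hinj
    case maps =>
      rintro ⟨i, m⟩ him
      rw [Finset.mem_coe, Finset.mem_product, Finset.mem_Icc, Finset.mem_Icc] at him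
      obtain ⟨⟨hi1, hiP⟩, hm1, hmn⟩ := him
      -- notation: A = (P2-i)*q, B = A/p, w = B*p
      have hAi : (P2 - i) * q + i * q = M := by
        rw [← Nat.add_mul, Nat.sub_add_cancel hiP, hM]
      have hw_le : (P2 - i) * q / p * p ≤ (P2 - i) * q := Nat.div_mul_le_self _ _
      have hw_gt : (P2 - i) * q < (P2 - i) * q / p * p + p := Nat.lt_div_mul_add hp0
      have hmp_le : m * p ≤ n / p * p := Nat.mul_le_mul_right p hmn
      have hnp : n / p * p ≤ n := Nat.div_mul_le_self _ _
      have hp_mp : p ≤ m * p := Nat.le_mul_of_pos_left p hm1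
      have hqM : q ≤ M := by rw [hM]; exact Nat.le_mul_of_pos_left q hP2
      have hdqn : (P2 - i) * q + n < q * p := by
        have h1 : i * q ≥ q := Nat.le_mul_of_pos_left q hi1
        have h4 : q * p = 2 * M := by rw [hM, hp]; ring
        omega
      have hjp : ((P2 - i) * q / p + m) * p = (P2 - i) * q / p * p + m * p := Nat.add_mul _ _ _
      have hjq : (P2 - i) * q / p + m < q := by
        have h1 : ((P2 - i) * q / p + m) * p < q * p := by omega
        exact Nat.lt_of_mul_lt_mul_right h1
      rw [Finset.mem_coe, mem_Gw]
      simp only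
      have hj0 : 0 < (P2 - i) * q / p + m := Nat.lt_of_lt_of_le hm1 (Nat.le_add_left m _)
      have hip : i < p := by omega
      have hlow : M + 1 ≤ i * q + ((P2 - i) * q / p + m) * p := by
        rw [hjp]; omega
      have hhigh : i * q + ((P2 - i) * q / p + m) * p ≤ M + n := by
        rw [hjp]; omega
      exact ⟨hi1, hip, hj0, hjq, hlow, hhigh⟩
    case inj =>
      rintro ⟨i, m⟩ ha ⟨i', m'⟩ hb hab
      simp only [Prod.mk.injEq] at hab
      obtain ⟨h1, h2⟩ := hab
      subst h1
      simp only [Prod.mk.injEq, true_and]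
      omega
  -- combine
  have harith : (P2 - 1) * ((n - 1) / p + 1) ≤ P2 * (n / p) + (P2 - 1) := by
    have h1 : (n - 1) / p ≤ n / p := Nat.div_le_div_right (by omega)
    have h2 : (P2 - 1) * ((n - 1) / p) ≤ P2 * (n / p) := Nat.mul_le_mul (by omega) h1
    calc (P2 - 1) * ((n - 1) / p + 1) = (P2 - 1) * ((n - 1) / p) + (P2 - 1) := by
          rw [Nat.mul_add, Nat.mul_one]
      _ ≤ P2 * (n / p) + (P2 - 1) := by omega
  omega

open scoped Classical in
/-- real-window finset -/
noncomputable def Fw (p q : ℕ) (a b : ℝ) : Finset (ℕ × ℕ) :=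
  ((Finset.Ioo 0 p) ×ˢ (Finset.Ioo 0 q)).filter
    (fun ij => a < (ij.1 : ℝ) / p + (ij.2 : ℝ) / q ∧ (ij.1 : ℝ) / p + (ij.2 : ℝ) / q < b)

lemma mem_Fw {p q : ℕ} {a b : ℝ} {ij : ℕ × ℕ} :
    ij ∈ Fw p q a b ↔ 0 < ij.1 ∧ ij.1 < p ∧ 0 < ij.2 ∧ ij.2 < q ∧
      a < (ij.1 : ℝ) / p + (ij.2 : ℝ) / q ∧ (ij.1 : ℝ) / p + (ij.2 : ℝ) / q < b := by
  simp [Fw, Finset.mem_filter, Finset.mem_product, and_assoc]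

lemma latticeCount_eq (p q : ℕ) (t : ℝ) :
    latticeCount p q t = (Fw p q t (t + 1)).card := by
  rw [latticeCount, ← Set.ncard_coe_finset]
  congr 1
  ext ⟨i, j⟩
  simp only [Set.mem_setOf_eq, Finset.coe_filter, Fw, Finset.mem_product, Finset.mem_Ioo]
  tauto

lemma key_mul (p q i j : ℕ) (hp : 0 < p) (hq : 0 < q) :
    ((i : ℝ) / p + (j : ℝ) / q) * ((p : ℝ) * q) = ((i * q + j * p : ℕ) : ℝ) := by
  have hp' : (p : ℝ) ≠ 0 := Nat.cast_ne_zero.mpr hp.ne'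
  have hq' : (q : ℝ) ≠ 0 := Nat.cast_ne_zero.mpr hq.ne'
  push_cast
  field_simp

lemma flip_x (p q i j : ℕ) (hp : 0 < p) (hq : 0 < q) (hip : i < p) (hjq : j < q) :
    ((p - i : ℕ) : ℝ) / p + ((q - j : ℕ) : ℝ) / q = 2 - ((i : ℝ) / p + (j : ℝ) / q) := by
  have hp' : (p : ℝ) ≠ 0 := Nat.cast_ne_zero.mpr hp.ne'
  have hq' : (q : ℝ) ≠ 0 := Nat.cast_ne_zero.mpr hq.ne'
  rw [Nat.cast_sub hip.le, Nat.cast_sub hjq.le]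
  field_simp
  ring

lemma not_mid (p q P2 : ℕ) (hP2 : 0 < P2) (hp2 : p = 2 * P2) (hco : Nat.Coprime p q)
    (i j c : ℕ) (hj0 : 0 < j) (hjq : j < q) (hk : i * q + j * p = c * (P2 * q)) : False := by
  have hq0 : 0 < q := by omega
  have hsub : (c * P2 - i) * q = c * P2 * q - i * q := Nat.sub_mul _ _ _
  have hcc : c * (P2 * q) = c * P2 * q := by ring
  have hjp0 : 0 < j * p := Nat.mul_pos hj0 (by omega)
  have hjp : j * p = (c * P2 - i) * q := by omega
  have hdvd : q ∣ j * p := ⟨c * P2 - i, by rw [hjp, mul_comm]⟩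
  have hqj : q ∣ j := (Nat.Coprime.dvd_of_dvd_mul_right hco.symm) hdvd
  have := Nat.le_of_dvd hj0 hqj
  omega

lemma Fw_flip_subset (p q : ℕ) (hp : 0 < p) (hq : 0 < q) (a b : ℝ) (ij : ℕ × ℕ)
    (h : ij ∈ Fw p q a b) : (p - ij.1, q - ij.2) ∈ Fw p q (2 - b) (2 - a) := by
  obtain ⟨i, j⟩ := ij
  rw [mem_Fw] at h ⊢
  obtain ⟨hi0, hip, hj0, hjq, h1, h2⟩ := h
  simp only
  rw [flip_x p q i j hp hq hip hjq]
  refine ⟨by omega, by omega, by omega, by omega, by linarith, by linarith⟩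

lemma Fw_card_symm (p q : ℕ) (hp : 0 < p) (hq : 0 < q) (t : ℝ) :
    (Fw p q t (t + 1)).card = (Fw p q (1 - t) ((1 - t) + 1)).card := by
  have he1 : (2 : ℝ) - (t + 1) = 1 - t := by ring
  have he2 : (2 : ℝ) - t = (1 - t) + 1 := by ring
  have he3 : (2 : ℝ) - ((1 - t) + 1) = t := by ring
  have he4 : (2 : ℝ) - (1 - t) = t + 1 := by ring
  apply Finset.card_bij' (fun ij _ => (p - ij.1, q - ij.2)) (fun ij _ => (p - ij.1, q - ij.2))
  · intro ij hij
    have := Fw_flip_subset p q hp hq _ _ ij hij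
    rwa [he1, he2] at this
  · intro ij hij
    have := Fw_flip_subset p q hp hq _ _ ij hij
    rwa [he3, he4] at this
  · intro ij hij
    rw [mem_Fw] at hij
    obtain ⟨i, j⟩ := ij
    simp only [Prod.mk.injEq]
    constructor <;> omega
  · intro ij hij
    rw [mem_Fw] at hij
    obtain ⟨i, j⟩ := ij
    simp only [Prod.mk.injEq]
    constructor <;> omega

lemma half_bound (p q P2 : ℕ) (hP2 : 0 < P2) (hp2 : p = 2 * P2) (hpq : p < q)
    (hco : Nat.Coprime p q) (t : ℝ) (ht0 : 0 < t) (ht : t < 1 / 2) :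
    (Fw p q t (t + 1)).card ≤ (Fw p q (1 / 2) (1 / 2 + 1)).card + (P2 - 1) := by
  classical
  have hp0 : 0 < p := by omega
  have hq0 : 0 < q := by omega
  have hpq0 : (0 : ℝ) < (p : ℝ) * q := by positivity
  set X := (Finset.Ioo 0 p) ×ˢ (Finset.Ioo 0 q) with hX
  set x : ℕ × ℕ → ℝ := fun ij => (ij.1 : ℝ) / p + (ij.2 : ℝ) / q with hxdef
  -- half-value facts
  have hhalf : (1 / 2 : ℝ) * ((p : ℝ) * q) = ((P2 * q : ℕ) : ℝ) := by
    rw [hp2]; push_cast; ring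
  have hne : ∀ ij : ℕ × ℕ, 0 < ij.1 → ij.1 < p → 0 < ij.2 → ij.2 < q → x ij ≠ 1 / 2 := by
    rintro ⟨i, j⟩ hi0 hip hj0 hjq heq
    have hkr : ((i * q + j * p : ℕ) : ℝ) = ((P2 * q : ℕ) : ℝ) := by
      rw [← key_mul p q i j hp0 hq0]
      simp only [hxdef] at heq
      rw [heq, hhalf]
    have hk : i * q + j * p = P2 * q := Nat.cast_injective hkr
    exact not_mid p q P2 hP2 hp2 hco i j 1 hj0 hjq (by omega)
  set A := X.filter (fun ij => t < x ij ∧ x ij < 1 / 2) with hA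
  set B := X.filter (fun ij => 1 / 2 < x ij ∧ x ij < t + 1) with hB
  set C := X.filter (fun ij => t + 1 ≤ x ij ∧ x ij < 1 / 2 + 1) with hC
  set D := X.filter (fun ij => 1 / 2 < x ij ∧ x ij < 1 - t) with hD
  have hsplit : (Fw p q t (t + 1)).card ≤ A.card + B.card := by
    refine le_trans (Finset.card_le_card ?_) (Finset.card_union_le _ _)
    intro ij hij
    rw [mem_Fw] at hij
    obtain ⟨hi0, hip, hj0, hjq, h1, h2⟩ := hij
    have hXm : ij ∈ X := by
      rw [hX, Finset.mem_product, Finset.mem_Ioo, Finset.mem_Ioo]; exact ⟨⟨hi0, hip⟩, hj0, hjq⟩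
    rcases (hne ij hi0 hip hj0 hjq).lt_or_gt with hlt | hgt
    · exact Finset.mem_union_left _ (Finset.mem_filter.mpr ⟨hXm, h1, hlt⟩)
    · exact Finset.mem_union_right _ (Finset.mem_filter.mpr ⟨hXm, hgt, h2⟩)
  have hBC : B.card + C.card ≤ (Fw p q (1 / 2) (1 / 2 + 1)).card := by
    have hdisj : Disjoint B C := by
      rw [Finset.disjoint_left]
      intro ij hijB hijC
      have h1 := (Finset.mem_filter.mp hijB).2.2
      have h2 := (Finset.mem_filter.mp hijC).2.1
      linarith
    rw [← Finset.card_union_of_disjoint hdisj]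
    apply Finset.card_le_card
    intro ij hij
    rcases Finset.mem_union.mp hij with h | h
    · have hm := Finset.mem_filter.mp h
      have hXm := hm.1
      rw [hX, Finset.mem_product, Finset.mem_Ioo, Finset.mem_Ioo] at hXm
      have hm2 := hm.2
      simp only [hxdef] at hm2
      rw [mem_Fw]
      exact ⟨hXm.1.1, hXm.1.2, hXm.2.1, hXm.2.2, hm2.1, by linarith [hm2.2]⟩
    · have hm := Finset.mem_filter.mp h
      have hXm := hm.1
      rw [hX, Finset.mem_product, Finset.mem_Ioo, Finset.mem_Ioo] at hXm
      have hm2 := hm.2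
      simp only [hxdef] at hm2
      rw [mem_Fw]
      exact ⟨hXm.1.1, hXm.1.2, hXm.2.1, hXm.2.2, by linarith [hm2.1], hm2.2⟩
  have hDC : D.card ≤ C.card := by
    apply Finset.card_le_card_of_injOn (fun ij => (p - ij.1, q - ij.2))
    · rintro ⟨i, j⟩ hij
      have hm := Finset.mem_filter.mp hij
      have hXm := hm.1
      rw [hX, Finset.mem_product, Finset.mem_Ioo, Finset.mem_Ioo] at hXm
      obtain ⟨⟨hi0, hip⟩, hj0, hjq⟩ := hXm
      have hflip := flip_x p q i j hp0 hq0 hip hjq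
      apply Finset.mem_filter.mpr
      constructor
      · rw [hX, Finset.mem_product, Finset.mem_Ioo, Finset.mem_Ioo]
        constructor <;> constructor <;> dsimp only <;> omega
      · have hm2 := hm.2
        simp only [hxdef] at hm2 ⊢
        rw [hflip]
        constructor
        · linarith [hm2.2]
        · linarith [hm2.1]
    · rintro ⟨a1, a2⟩ ha ⟨b1, b2⟩ hb hab
      have hXa := (Finset.mem_filter.mp ha).1
      have hXb := (Finset.mem_filter.mp hb).1
      rw [hX, Finset.mem_product, Finset.mem_Ioo, Finset.mem_Ioo] at hXa hXb
      simp only [Prod.mk.injEq] at hab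
      simp only [Prod.mk.injEq]
      constructor <;> omega
  -- integer bridging
  obtain ⟨M, hM⟩ : ∃ M, M = P2 * q := ⟨_, rfl⟩
  have hM1 : 1 ≤ M := hM ▸ Nat.mul_pos hP2 hq0
  have htpq0 : (0 : ℝ) ≤ t * ((p : ℝ) * q) := by positivity
  set aZ := ⌊t * ((p : ℝ) * q)⌋ with haZ
  have haZ0 : 0 ≤ aZ := Int.floor_nonneg.mpr htpq0
  obtain ⟨a, ha⟩ : ∃ a : ℕ, a = aZ.toNat := ⟨_, rfl⟩
  have hacast : ((a : ℕ) : ℝ) = (aZ : ℝ) := by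
    rw [ha]; exact_mod_cast congrArg (Int.cast : ℤ → ℝ) (Int.toNat_of_nonneg haZ0)
  have hfl : ((a : ℕ) : ℝ) ≤ t * ((p : ℝ) * q) := by rw [hacast]; exact Int.floor_le _
  have hfu : t * ((p : ℝ) * q) < (a : ℕ) + 1 := by
    rw [hacast]; exact Int.lt_floor_add_one _
  have ha_lt : a < M := by
    have h1 : ((a : ℕ) : ℝ) < ((M : ℕ) : ℝ) := by
      calc ((a : ℕ) : ℝ) ≤ t * ((p : ℝ) * q) := hfl
        _ < (1 / 2) * ((p : ℝ) * q) := by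
            apply mul_lt_mul_of_pos_right ht hpq0
        _ = ((M : ℕ) : ℝ) := by rw [hhalf, hM]
    exact_mod_cast h1
  obtain ⟨n, hn⟩ : ∃ n, n = M - 1 - a := ⟨_, rfl⟩
  have hAG : A ⊆ Gw p q (M - n) (M - 1) := by
    rintro ⟨i, j⟩ hij
    have hm := Finset.mem_filter.mp hij
    have hXm := hm.1
    rw [hX, Finset.mem_product, Finset.mem_Ioo, Finset.mem_Ioo] at hXm
    obtain ⟨⟨hi0, hip⟩, hj0, hjq⟩ := hXm
    obtain ⟨h1, h2⟩ := hm.2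
    simp only [hxdef] at h1 h2
    have hk1 : t * ((p : ℝ) * q) < ((i * q + j * p : ℕ) : ℝ) := by
      rw [← key_mul p q i j hp0 hq0]
      exact mul_lt_mul_of_pos_right h1 hpq0
    have hk1' : a < i * q + j * p := by
      have : ((a : ℕ) : ℝ) < ((i * q + j * p : ℕ) : ℝ) := lt_of_le_of_lt hfl hk1
      exact_mod_cast this
    have hk2 : ((i * q + j * p : ℕ) : ℝ) < ((M : ℕ) : ℝ) := by
      rw [← key_mul p q i j hp0 hq0, hM, ← hhalf]
      exact mul_lt_mul_of_pos_right h2 hpq0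
    have hk2' : i * q + j * p < M := by exact_mod_cast hk2
    rw [mem_Gw]
    dsimp only
    clear hM haZ
    exact ⟨hi0, hip, hj0, hjq, by omega, by omega⟩
  have hGD : Gw p q (M + 1) (M + n) ⊆ D := by
    rintro ⟨i, j⟩ hij
    rw [mem_Gw] at hij
    dsimp only at hij
    obtain ⟨hi0, hip, hj0, hjq, h1, h2⟩ := hij
    have hXm : (i, j) ∈ X := by
      rw [hX, Finset.mem_product, Finset.mem_Ioo, Finset.mem_Ioo]; exact ⟨⟨hi0, hip⟩, hj0, hjq⟩
    have hkr : ((i : ℝ) / p + (j : ℝ) / q) * ((p : ℝ) * q) = ((i * q + j * p : ℕ) : ℝ) :=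
      key_mul p q i j hp0 hq0
    have hgt : 1 / 2 < (i : ℝ) / p + (j : ℝ) / q := by
      have hr : ((M : ℕ) : ℝ) < ((i * q + j * p : ℕ) : ℝ) := by
        exact_mod_cast (by clear hM haZ; omega : M < i * q + j * p)
      have : (1 / 2 : ℝ) * ((p : ℝ) * q) < ((i : ℝ) / p + (j : ℝ) / q) * ((p : ℝ) * q) := by
        rw [hkr, hhalf, ← hM]; exact hr
      exact lt_of_mul_lt_mul_right this hpq0.le
    have hlt : (i : ℝ) / p + (j : ℝ) / q < 1 - t := by
      have hnr : ((n : ℕ) : ℝ) + a + 1 = ((M : ℕ) : ℝ) := by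
        have : n + a + 1 = M := by omega
        exact_mod_cast congrArg (Nat.cast : ℕ → ℝ) this
      have h2M : (p : ℝ) * q = 2 * ((M : ℕ) : ℝ) := by
        rw [hM, hp2]; push_cast; ring
      have hkle : ((i * q + j * p : ℕ) : ℝ) ≤ ((M : ℕ) : ℝ) + n := by
        exact_mod_cast h2
      have hstep : ((i : ℝ) / p + (j : ℝ) / q) * ((p : ℝ) * q) < (1 - t) * ((p : ℝ) * q) := by
        rw [hkr]
        calc ((i * q + j * p : ℕ) : ℝ) ≤ ((M : ℕ) : ℝ) + n := hkle
          _ = 2 * ((M : ℕ) : ℝ) - (a + 1) := by linarith [hnr]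
          _ < 2 * ((M : ℕ) : ℝ) - t * ((p : ℝ) * q) := by linarith [hfu]
          _ = (1 - t) * ((p : ℝ) * q) := by rw [h2M]; ring
      exact lt_of_mul_lt_mul_right hstep hpq0.le
    exact Finset.mem_filter.mpr ⟨hXm, hgt, hlt⟩
  have hcore := core P2 q n M hP2 hq0 hM (by omega)
  rw [← hp2] at hcore
  have c1 := Finset.card_le_card hAG
  have c2 := Finset.card_le_card hGD
  clear hM haZ
  omega

theorem sigmaMax_le_even (p q : ℕ) (hp : 0 < p) (hpq : p < q) (hco : Nat.Coprime p q)
    (hpe : Even p) :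
    sigmaMax p q ≤ sigmaClassical p q + p - 2 := by
  obtain ⟨P2, hP2eq⟩ := hpe
  have hp2 : p = 2 * P2 := by omega
  have hP2 : 0 < P2 := by omega
  have hq0 : 0 < q := by omega
  have key : ∀ t ∈ Set.Ioo (0 : ℝ) 1, sigmaT p q t ≤ sigmaClassical p q + p - 2 := by
    rintro t ⟨ht0, ht1⟩
    have hN : latticeCount p q t ≤ latticeCount p q (1 / 2) + (P2 - 1) := by
      rw [latticeCount_eq, latticeCount_eq]
      rcases lt_trichotomy t (1 / 2) with h | h | h
      · exact half_bound p q P2 hP2 hp2 hpq hco t ht0 h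
      · rw [h]; exact Nat.le_add_right _ _
      · rw [Fw_card_symm p q hp hq0 t]
        exact half_bound p q P2 hP2 hp2 hpq hco (1 - t) (by linarith) (by linarith)
    simp only [sigmaT, sigmaClassical]
    omega
  rw [sigmaMax]
  apply csSup_le
  · exact ⟨sigmaT p q (1 / 2), Set.mem_image_of_mem _ ⟨by norm_num, by norm_num⟩⟩
  · rintro b ⟨t, ht, rfl⟩
    exact key t ht
end

section
/- Let 0 < p < q be coprime integers. Then the classical signature is given by the lattice-point formula σ(p,q) = (p−1)(q−1) − 4·∑_{0 < j < p, j ≡ p (mod 2)} ⌊j·q/(2p)⌋. -/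
section
variable (p q : ℕ)

lemma tk_no_eq (i j k : ℕ) (hco : Nat.Coprime p q) (hi : 0 < i) (hi' : i < p)
    (hj : 0 < j) (hj' : j < q) : 2 * (i * q + j * p) ≠ k * (p * q) := by
  intro h
  have hpd : p ∣ 2 * i * q := by
    have h1 : p ∣ 2 * (i * q + j * p) := h ▸ ⟨k * q, by ring⟩
    have h2 : 2 * i * q = 2 * (i * q + j * p) - p * (2 * j) := by
      have : 2 * (i * q + j * p) = 2 * i * q + p * (2 * j) := by ring
      omega
    rw [h2]; exact Nat.dvd_sub h1 (Dvd.intro _ rfl)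
  have hqd : q ∣ 2 * j * p := by
    have h1 : q ∣ 2 * (i * q + j * p) := h ▸ ⟨k * p, by ring⟩
    have h2 : 2 * j * p = 2 * (i * q + j * p) - q * (2 * i) := by
      have : 2 * (i * q + j * p) = 2 * j * p + q * (2 * i) := by ring
      omega
    rw [h2]; exact Nat.dvd_sub h1 (Dvd.intro _ rfl)
  have hp2 : p ∣ 2 * i := hco.dvd_of_dvd_mul_right hpd
  have hq2 : q ∣ 2 * j := (hco.symm).dvd_of_dvd_mul_right hqd
  have hpe : 2 * i = p := by
    rcases hp2 with ⟨c, hc⟩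
    have hc2 : c < 2 := by nlinarith
    interval_cases c <;> omega
  have hqe : 2 * j = q := by
    rcases hq2 with ⟨c, hc⟩
    have hc2 : c < 2 := by nlinarith
    interval_cases c <;> omega
  have : (2 : ℕ) ∣ Nat.gcd p q := Nat.dvd_gcd ⟨i, hpe.symm⟩ ⟨j, hqe.symm⟩
  rw [hco] at this; omega

-- the three finsets
def tkFs : Finset (ℕ × ℕ) := Finset.Ioo 0 p ×ˢ Finset.Ioo 0 q
def tkAs : Finset (ℕ × ℕ) := (tkFs p q).filter
  (fun ij => p * q < 2 * (ij.1 * q + ij.2 * p) ∧ 2 * (ij.1 * q + ij.2 * p) < 3 * (p * q))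
def tkBs : Finset (ℕ × ℕ) := (tkFs p q).filter (fun ij => 2 * (ij.1 * q + ij.2 * p) < p * q)
def tkCs : Finset (ℕ × ℕ) := (tkFs p q).filter (fun ij => 3 * (p * q) < 2 * (ij.1 * q + ij.2 * p))

lemma tk_card_split (hco : Nat.Coprime p q) :
    (tkFs p q).card = (tkAs p q).card + (tkBs p q).card + (tkCs p q).card := by
  classical
  have h1 := Finset.card_filter_add_card_filter_not
    (s := tkFs p q) (p := fun ij => 2 * (ij.1 * q + ij.2 * p) < p * q)
  have h2 := Finset.card_filter_add_card_filter_not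
    (s := (tkFs p q).filter (fun ij => ¬ (2 * (ij.1 * q + ij.2 * p) < p * q)))
    (p := fun ij => 2 * (ij.1 * q + ij.2 * p) < 3 * (p * q))
  have e1 : ((tkFs p q).filter (fun ij => ¬ (2 * (ij.1 * q + ij.2 * p) < p * q))).filter
      (fun ij => 2 * (ij.1 * q + ij.2 * p) < 3 * (p * q)) = tkAs p q := by
    rw [Finset.filter_filter]
    apply Finset.filter_congr
    rintro ⟨i, j⟩ hm
    simp only [tkFs, Finset.mem_product, Finset.mem_Ioo] at hm
    have := tk_no_eq p q i j 1 hco hm.1.1 hm.1.2 hm.2.1 hm.2.2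
    simp only [one_mul] at this
    dsimp only
    constructor <;> intro h <;> [exact ⟨by omega, h.2⟩; exact ⟨by omega, h.2⟩]
  have e2 : ((tkFs p q).filter (fun ij => ¬ (2 * (ij.1 * q + ij.2 * p) < p * q))).filter
      (fun ij => ¬ (2 * (ij.1 * q + ij.2 * p) < 3 * (p * q))) = tkCs p q := by
    rw [Finset.filter_filter]
    apply Finset.filter_congr
    rintro ⟨i, j⟩ hm
    simp only [tkFs, Finset.mem_product, Finset.mem_Ioo] at hm
    have := tk_no_eq p q i j 3 hco hm.1.1 hm.1.2 hm.2.1 hm.2.2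
    dsimp only
    constructor <;> intro h <;> omega
  rw [e1, e2] at h2
  unfold tkBs
  omega

lemma tk_card_BC : (tkBs p q).card = (tkCs p q).card := by
  apply Finset.card_nbij' (i := fun ij => (p - ij.1, q - ij.2))
    (j := fun ij => (p - ij.1, q - ij.2))
  · rintro ⟨i, j⟩ hm
    simp only [tkBs, tkCs, tkFs, Finset.mem_coe, Finset.mem_filter, Finset.mem_product, Finset.mem_Ioo] at hm ⊢
    obtain ⟨⟨⟨hi, hi'⟩, hj, hj'⟩, hlt⟩ := hm
    refine ⟨⟨⟨by omega, by omega⟩, by omega, by omega⟩, ?_⟩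
    have e1 : (p - i) * q = p * q - i * q := by rw [Nat.sub_mul]
    have e2 : (q - j) * p = q * p - j * p := by rw [Nat.sub_mul]
    have l1 : i * q ≤ p * q := Nat.mul_le_mul_right _ (by omega)
    have l2 : j * p ≤ q * p := Nat.mul_le_mul_right _ (by omega)
    have l3 : q * p = p * q := Nat.mul_comm q p
    omega
  · rintro ⟨i, j⟩ hm
    simp only [tkBs, tkCs, tkFs, Finset.mem_coe, Finset.mem_filter, Finset.mem_product, Finset.mem_Ioo] at hm ⊢
    obtain ⟨⟨⟨hi, hi'⟩, hj, hj'⟩, hlt⟩ := hm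
    refine ⟨⟨⟨by omega, by omega⟩, by omega, by omega⟩, ?_⟩
    have e1 : (p - i) * q = p * q - i * q := by rw [Nat.sub_mul]
    have e2 : (q - j) * p = q * p - j * p := by rw [Nat.sub_mul]
    have l1 : i * q ≤ p * q := Nat.mul_le_mul_right _ (by omega)
    have l2 : j * p ≤ q * p := Nat.mul_le_mul_right _ (by omega)
    have l3 : q * p = p * q := Nat.mul_comm q p
    omega
  · rintro ⟨i, j⟩ hm
    simp only [tkBs, tkFs, Finset.mem_coe, Finset.mem_filter, Finset.mem_product, Finset.mem_Ioo] at hm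
    have : i ≤ p ∧ j ≤ q := ⟨le_of_lt hm.1.1.2, le_of_lt hm.1.2.2⟩
    simp only [Prod.mk.injEq]
    omega
  · rintro ⟨i, j⟩ hm
    simp only [tkCs, tkFs, Finset.mem_coe, Finset.mem_filter, Finset.mem_product, Finset.mem_Ioo] at hm
    have : i ≤ p ∧ j ≤ q := ⟨le_of_lt hm.1.1.2, le_of_lt hm.1.2.2⟩
    simp only [Prod.mk.injEq]
    omega

lemma tk_inner_empty (i : ℕ) (hq : 0 < q) (hip : p ≤ 2 * i) :
    ((Finset.Ioo 0 q).filter (fun j => 2 * (i * q + j * p) < p * q)) = ∅ := by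
  rw [Finset.filter_eq_empty_iff]
  intro j _
  push_neg
  calc p * q ≤ 2 * i * q := Nat.mul_le_mul_right _ hip
    _ ≤ 2 * (i * q + j * p) := by ring_nf; omega

lemma tk_inner_count (i : ℕ) (hco : Nat.Coprime p q) (hp : 0 < p) (hq : 0 < q)
    (hi : 0 < i) (hip : 2 * i < p) :
    ((Finset.Ioo 0 q).filter (fun j => 2 * (i * q + j * p) < p * q)).card
      = ((p - 2 * i) * q) / (2 * p) := by
  have hnd : ¬ (2 * p ∣ (p - 2 * i) * q) := by
    rintro ⟨c, hc⟩
    have hpd : p ∣ (p - 2 * i) * q := ⟨2 * c, by rw [hc]; ring⟩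
    have : p ∣ p - 2 * i := hco.dvd_of_dvd_mul_right hpd
    have := Nat.le_of_dvd (by omega) this
    omega
  have hsum : 2 * i * q + (p - 2 * i) * q = p * q := by
    rw [← Nat.add_mul]
    congr 1
    omega
  set M := (p - 2 * i) * q with hM
  have hmod : M % (2 * p) ≠ 0 := fun h => hnd (Nat.dvd_of_mod_eq_zero h)
  have hdm := Nat.div_add_mod M (2 * p)
  have hKM : (M / (2 * p)) * (2 * p) < M := by
    have hcomm := Nat.mul_comm (M / (2 * p)) (2 * p)
    omega
  have heq : (Finset.Ioo 0 q).filter (fun j => 2 * (i * q + j * p) < p * q)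
      = Finset.Ioc 0 (M / (2 * p)) := by
    ext j
    simp only [Finset.mem_filter, Finset.mem_Ioo, Finset.mem_Ioc]
    constructor
    · rintro ⟨⟨hj, hj'⟩, hlt⟩
      refine ⟨hj, ?_⟩
      rw [Nat.le_div_iff_mul_le (by omega)]
      have : 2 * (j * p) < M := by
        have : 2 * (i * q + j * p) = 2 * i * q + 2 * (j * p) := by ring
        omega
      nlinarith
    · rintro ⟨hj, hjK⟩
      have hjm : j * (2 * p) ≤ (M / (2 * p)) * (2 * p) := Nat.mul_le_mul_right _ hjK
      have hjM : 2 * (j * p) < M := by nlinarith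
      have hMpq : M ≤ p * q := by omega
      have hjq : j < q := by nlinarith
      refine ⟨⟨hj, hjq⟩, ?_⟩
      have : 2 * (i * q + j * p) = 2 * i * q + 2 * (j * p) := by ring
      omega
  rw [heq, Nat.card_Ioc, Nat.sub_zero]

lemma tk_card_B (hco : Nat.Coprime p q) (hp : 0 < p) (hq : 0 < q) :
    (tkBs p q).card = ∑ i ∈ (Finset.Ioo 0 p).filter (fun i => 2 * i < p),
      ((p - 2 * i) * q) / (2 * p) := by
  classical
  have hfib : (tkBs p q).card = ∑ i ∈ Finset.Ioo 0 p,
      ((tkBs p q).filter (fun ij => ij.1 = i)).card := by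
    apply Finset.card_eq_sum_card_fiberwise
    rintro ⟨i, j⟩ hm
    simp only [tkBs, tkFs, Finset.mem_coe, Finset.mem_filter, Finset.mem_product, Finset.mem_Ioo] at hm
    exact Finset.mem_Ioo.mpr hm.1.1
  have hfiber : ∀ i ∈ Finset.Ioo 0 p, ((tkBs p q).filter (fun ij => ij.1 = i)).card
      = ((Finset.Ioo 0 q).filter (fun j => 2 * (i * q + j * p) < p * q)).card := by
    intro i hi
    apply Finset.card_nbij' (i := fun ij => ij.2) (j := fun j => (i, j))
    · rintro ⟨a, b⟩ hm
      simp only [tkBs, tkFs, Finset.mem_coe, Finset.mem_filter, Finset.mem_product, Finset.mem_Ioo] at hm ⊢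
      have ha : a = i := hm.2
      subst ha
      exact ⟨hm.1.1.2, hm.1.2⟩
    · intro b hb
      simp only [tkBs, tkFs, Finset.mem_coe, Finset.mem_filter, Finset.mem_product, Finset.mem_Ioo] at hb ⊢
      exact ⟨⟨⟨Finset.mem_Ioo.mp hi, hb.1⟩, hb.2⟩, trivial⟩
    · rintro ⟨a, b⟩ hm
      simp only [tkBs, tkFs, Finset.mem_coe, Finset.mem_filter, Finset.mem_product, Finset.mem_Ioo] at hm
      simp only [Prod.mk.injEq]
      exact ⟨hm.2.symm, trivial⟩
    · intro b _
      rfl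
  rw [hfib, Finset.sum_congr rfl hfiber]
  rw [← Finset.sum_filter_add_sum_filter_not (Finset.Ioo 0 p) (fun i => 2 * i < p)]
  have hz : ∑ i ∈ (Finset.Ioo 0 p).filter (fun i => ¬ 2 * i < p),
      ((Finset.Ioo 0 q).filter (fun j => 2 * (i * q + j * p) < p * q)).card = 0 := by
    apply Finset.sum_eq_zero
    intro i hi
    simp only [Finset.mem_filter, Finset.mem_Ioo] at hi
    rw [tk_inner_empty p q i hq (by omega)]
    rfl
  rw [hz, add_zero]
  apply Finset.sum_congr rfl
  intro i hi
  simp only [Finset.mem_filter, Finset.mem_Ioo] at hi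
  exact tk_inner_count p q i hco hp hq hi.1.1 hi.2

lemma tk_card_B' (hco : Nat.Coprime p q) (hp : 0 < p) (hq : 0 < q) :
    (tkBs p q).card = ∑ j ∈ (Finset.Ioo 0 p).filter (fun j => j % 2 = p % 2),
      (j * q) / (2 * p) := by
  rw [tk_card_B p q hco hp hq]
  apply Finset.sum_nbij' (i := fun i => p - 2 * i) (j := fun j => (p - j) / 2)
  · intro a ha
    simp only [Finset.mem_filter, Finset.mem_Ioo] at ha ⊢
    omega
  · intro a ha
    simp only [Finset.mem_filter, Finset.mem_Ioo] at ha ⊢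
    omega
  · intro a ha
    simp only [Finset.mem_filter, Finset.mem_Ioo] at ha
    omega
  · intro a ha
    simp only [Finset.mem_filter, Finset.mem_Ioo] at ha
    omega
  · intro a _
    rfl

end

lemma ineq_iff (p q i j : ℕ) (hp : 0 < p) (hq : 0 < q) :
    ((1:ℝ)/2 < (i:ℝ)/p + (j:ℝ)/q ↔ p * q < 2 * (i * q + j * p)) ∧
    ((i:ℝ)/p + (j:ℝ)/q < 1/2 + 1 ↔ 2 * (i * q + j * p) < 3 * (p * q)) := by
  have hp' : (0:ℝ) < p := by exact_mod_cast hp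
  have hq' : (0:ℝ) < q := by exact_mod_cast hq
  have key : (i:ℝ)/p + (j:ℝ)/q = ((i*q + j*p : ℕ) : ℝ) / ((p*q : ℕ) : ℝ) := by
    push_cast; field_simp
  constructor
  · rw [key, lt_div_iff₀ (by positivity), ← Nat.cast_lt (α := ℝ)]
    push_cast; constructor <;> intro h <;> nlinarith
  · rw [key, div_lt_iff₀ (by positivity), ← Nat.cast_lt (α := ℝ)]
    push_cast; constructor <;> intro h <;> nlinarith

lemma lc_eq (p q : ℕ) (hp : 0 < p) (hq : 0 < q) :
    latticeCount p q (1/2) = ((Finset.Ioo 0 p ×ˢ Finset.Ioo 0 q).filter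
      (fun ij => p * q < 2 * (ij.1 * q + ij.2 * p) ∧
        2 * (ij.1 * q + ij.2 * p) < 3 * (p * q))).card := by
  rw [latticeCount, ← Set.ncard_coe_finset]
  congr 1
  ext ⟨i, j⟩
  simp only [Set.mem_setOf_eq, Finset.coe_filter, Finset.mem_product, Finset.mem_Ioo]
  rw [(ineq_iff p q i j hp hq).1, (ineq_iff p q i j hp hq).2]
  tauto

theorem sigmaClassical_lattice_formula (p q : ℕ) (hp : 0 < p) (hpq : p < q)
    (hco : Nat.Coprime p q) :
    sigmaClassical p q =
      ((p : ℤ) - 1) * ((q : ℤ) - 1) -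
        4 * ∑ j ∈ (Finset.Ioo 0 p).filter (fun j => j % 2 = p % 2),
          ((j : ℤ) * (q : ℤ)) / (2 * (p : ℤ)) := by
  have hq : 0 < q := hp.trans hpq
  have hlc : latticeCount p q (1/2) = (tkAs p q).card := lc_eq p q hp hq
  have hsplit : (tkFs p q).card = (tkAs p q).card + 2 * ((Finset.Ioo 0 p).filter
      (fun j => j % 2 = p % 2)).sum (fun j => (j * q) / (2 * p)) := by
    have h1 := tk_card_split p q hco
    have h2 := tk_card_BC p q
    have h3 := tk_card_B' p q hco hp hq
    unfold tkAs at *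
    omega
  have hF : (tkFs p q).card = (p - 1) * (q - 1) := by
    simp [tkFs, Nat.card_Ioo]
  -- integer sum equals cast of nat sum
  have hsum : ∑ j ∈ (Finset.Ioo 0 p).filter (fun j => j % 2 = p % 2),
      ((j : ℤ) * (q : ℤ)) / (2 * (p : ℤ))
      = ((∑ j ∈ (Finset.Ioo 0 p).filter (fun j => j % 2 = p % 2),
          (j * q) / (2 * p) : ℕ) : ℤ) := by
    rw [Nat.cast_sum]
    apply Finset.sum_congr rfl
    intro j _
    rw [Int.natCast_ediv]
    push_cast
    rfl
  rw [sigmaClassical, sigmaT, hlc, hsum]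
  have hcast : ((p : ℤ) - 1) * ((q : ℤ) - 1) = (((p - 1) * (q - 1) : ℕ) : ℤ) := by
    push_cast [Nat.cast_sub hp, Nat.cast_sub hq]
    ring
  rw [hcast]
  have := congrArg (Nat.cast : ℕ → ℤ) hsplit
  rw [hF] at this
  push_cast at this ⊢
  linarith
end

section
/- Let 0 < p < q be coprime integers with p even. Then the classical signature satisfies σ(p, p+q) = σ(p, q) + p²/2. -/
open Finset in
def cnt (p q i : ℕ) : ℕ :=
  ((Finset.Ioo 0 q).filter
    (fun j => p*q < 2*(i*q + j*p) ∧ 2*(i*q + j*p) < 3*(p*q))).card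

lemma lattice_eq (p q : ℕ) (hp : 0 < p) (hq : 0 < q) :
    latticeCount p q (1/2) = ∑ i ∈ Finset.Ioo 0 p, cnt p q i := by
  have hp' : (0:ℝ) < p := by exact_mod_cast hp
  have hq' : (0:ℝ) < q := by exact_mod_cast hq
  have hset : {ij : ℕ × ℕ | 0 < ij.1 ∧ ij.1 < p ∧ 0 < ij.2 ∧ ij.2 < q ∧
      (1/2 : ℝ) < (ij.1 : ℝ) / p + (ij.2 : ℝ) / q ∧
      (ij.1 : ℝ) / p + (ij.2 : ℝ) / q < 1/2 + 1} =
      ↑(((Finset.Ioo 0 p) ×ˢ (Finset.Ioo 0 q)).filter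
        (fun ij => p*q < 2*(ij.1*q + ij.2*p) ∧ 2*(ij.1*q + ij.2*p) < 3*(p*q))) := by
    ext ⟨i, j⟩
    simp only [Set.mem_setOf_eq, Finset.coe_filter, Finset.mem_product, Finset.mem_Ioo]
    have e1 : (i:ℝ)/p + (j:ℝ)/q = ((i*q + j*p : ℕ) : ℝ) / ((p*q : ℕ):ℝ) := by
      push_cast; field_simp
    have k1 : ((1:ℝ)/2 < (i:ℝ)/p + (j:ℝ)/q) ↔ p*q < 2*(i*q + j*p) := by
      rw [e1, div_lt_div_iff₀ two_pos (by positivity)]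
      rw [show ((1:ℝ)) * ((p*q:ℕ):ℝ) = ((p*q : ℕ):ℝ) by ring,
        show ((i*q+j*p : ℕ):ℝ) * 2 = ((2*(i*q+j*p) : ℕ):ℝ) by push_cast; ring]
      exact_mod_cast Iff.rfl
    have k2 : ((i:ℝ)/p + (j:ℝ)/q < 1/2 + 1) ↔ 2*(i*q + j*p) < 3*(p*q) := by
      rw [e1, show (1/2 + 1 : ℝ) = 3/2 by norm_num, div_lt_div_iff₀ (by positivity) two_pos]
      rw [show ((i*q+j*p : ℕ):ℝ) * 2 = ((2*(i*q+j*p) : ℕ):ℝ) by push_cast; ring,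
        show (3:ℝ) * ((p*q:ℕ):ℝ) = ((3*(p*q) : ℕ):ℝ) by push_cast; ring]
      exact_mod_cast Iff.rfl
    rw [k1, k2]
    tauto
  rw [latticeCount, hset, Set.ncard_coe_finset]
  rw [Finset.card_eq_sum_card_fiberwise (f := Prod.fst) (t := Finset.Ioo 0 p)
    (fun x hx => by simp only [Finset.mem_coe, Finset.mem_filter, Finset.mem_product] at hx; exact hx.1.1)]
  refine Finset.sum_congr rfl fun i hi => ?_
  rw [cnt]
  apply Finset.card_nbij' (fun x => x.2) (fun j => (i, j))
  · rintro ⟨a,b⟩ hx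
    simp only [Finset.mem_coe, Finset.mem_filter, Finset.mem_product, Finset.mem_Ioo] at hx ⊢
    obtain ⟨⟨⟨⟨ha0, hap⟩, hb⟩, hcond⟩, hfst⟩ := hx
    obtain rfl : a = i := hfst
    exact ⟨hb, hcond⟩
  · intro j hj
    simp only [Finset.mem_coe, Finset.mem_filter, Finset.mem_Ioo] at hj
    simp only [Finset.mem_Ioo] at hi
    refine Finset.mem_filter.2 ⟨Finset.mem_filter.2 ⟨?_, ?_⟩, rfl⟩
    · exact Finset.mem_product.2 ⟨Finset.mem_Ioo.2 hi, Finset.mem_Ioo.2 ⟨hj.1.1, hj.1.2⟩⟩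
    · exact hj.2
  · rintro ⟨a,b⟩ hx
    simp only [Finset.mem_coe, Finset.mem_filter] at hx
    have hfst : a = i := hx.2
    simp [hfst]
  · intro j hj; rfl

lemma cnt_low (m q i k : ℕ) (hm : 0 < m) (hq : 0 < q) (hik : i + k = m) :
    cnt (2*m) q i + (k*q)/(2*m) = q - 1 := by
  have h2m : 0 < 2*m := by omega
  have e : i*q + k*q = m*q := by rw [← add_mul, hik]
  have hkD : k*q < q*(2*m) := by
    have hk2 : k < 2*m := by omega
    calc k*q = q*k := mul_comm _ _
    _ < q*(2*m) := by exact (Nat.mul_lt_mul_left hq).2 hk2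
  have hDq : (k*q)/(2*m) < q := (Nat.div_lt_iff_lt_mul h2m).2 hkD
  have hfe : ((Finset.Ioo 0 q).filter
      (fun j => (2*m)*q < 2*(i*q + j*(2*m)) ∧ 2*(i*q + j*(2*m)) < 3*((2*m)*q))) =
      Finset.Ioo ((k*q)/(2*m)) q := by
    ext j
    simp only [Finset.mem_filter, Finset.mem_Ioo]
    have hc1 : ((2*m)*q < 2*(i*q + j*(2*m))) ↔ (k*q)/(2*m) < j := by
      rw [Nat.div_lt_iff_lt_mul h2m]
      constructor <;> intro h <;> nlinarith [e]
    constructor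
    · rintro ⟨⟨hj0, hjq⟩, hc, -⟩
      exact ⟨hc1.1 hc, hjq⟩
    · rintro ⟨hDj, hjq⟩
      have hj0 : 0 < j := lt_of_le_of_lt (Nat.zero_le _) hDj
      refine ⟨⟨hj0, hjq⟩, hc1.2 hDj, ?_⟩
      have hiq : i*q ≤ m*q := Nat.mul_le_mul_right q (by omega)
      have hj2 : j*(2*m) + 2*m ≤ q*(2*m) := by
        calc j*(2*m) + 2*m = (j+1)*(2*m) := by ring
        _ ≤ q*(2*m) := Nat.mul_le_mul_right _ (by omega)
      nlinarith
  rw [cnt, hfe, Nat.card_Ioo]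
  omega

lemma cnt_high (m q i l : ℕ) (hm : 0 < m) (hq : 0 < q) (hco : Nat.Coprime (2*m) q)
    (hil : i + l = 3*m) (hi1 : m < i) (hi2 : i < 2*m) :
    cnt (2*m) q i = (l*q)/(2*m) := by
  have h2m : 0 < 2*m := by omega
  have hl1 : m < l := by omega
  have hl2 : l < 2*m := by omega
  have e : i*q + l*q = 3*m*q := by rw [← add_mul, hil]
  have hnd : ¬ (2*m ∣ l*q) := by
    intro h
    have : 2*m ∣ l := (Nat.Coprime.dvd_of_dvd_mul_right hco) h
    have := Nat.le_of_dvd (by omega) this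
    omega
  have hlD : l*q < q*(2*m) := by
    calc l*q = q*l := mul_comm _ _
    _ < q*(2*m) := (Nat.mul_lt_mul_left hq).2 hl2
  have hDq : (l*q)/(2*m) < q := (Nat.div_lt_iff_lt_mul h2m).2 hlD
  have hfe : ((Finset.Ioo 0 q).filter
      (fun j => (2*m)*q < 2*(i*q + j*(2*m)) ∧ 2*(i*q + j*(2*m)) < 3*((2*m)*q))) =
      Finset.Ioc 0 ((l*q)/(2*m)) := by
    ext j
    simp only [Finset.mem_filter, Finset.mem_Ioo, Finset.mem_Ioc]
    have hc2 : (2*(i*q + j*(2*m)) < 3*((2*m)*q)) ↔ j ≤ (l*q)/(2*m) := by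
      rw [Nat.le_div_iff_mul_le h2m]
      have : j*(2*m) ≤ l*q ↔ j*(2*m) < l*q := by
        constructor
        · intro h
          rcases lt_or_eq_of_le h with h' | h'
          · exact h'
          · exact absurd ⟨j, by rw [← h']; ring⟩ hnd
        · exact le_of_lt
      rw [this]
      constructor <;> intro h <;> nlinarith [e]
    have hc1 : (2*m)*q < 2*(i*q + j*(2*m)) := by
      have : m*q < i*q := by
        calc m*q = q*m := mul_comm _ _
        _ < q*i := (Nat.mul_lt_mul_left hq).2 hi1
        _ = i*q := mul_comm _ _
      nlinarith
    constructor
    · rintro ⟨⟨hj0, hjq⟩, -, hc⟩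
      exact ⟨hj0, hc2.1 hc⟩
    · rintro ⟨hj0, hjD⟩
      exact ⟨⟨hj0, lt_of_le_of_lt hjD hDq⟩, hc1, hc2.2 hjD⟩
  rw [cnt, hfe, Nat.card_Ioc]
  exact Nat.sub_zero _

lemma key (m q : ℕ) (hm : 0 < m) (hq : 0 < q) (hco : Nat.Coprime (2*m) q) :
    (∑ i ∈ Finset.Ioo 0 (2*m), cnt (2*m) (2*m+q) i) + m
      = (∑ i ∈ Finset.Ioo 0 (2*m), cnt (2*m) q i) + 3*(m*m) := by
  have h2m : 0 < 2*m := by omega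
  have hco' : Nat.Coprime (2*m) (2*m+q) := by
    rw [add_comm, Nat.coprime_add_self_right]; exact hco
  have hI : Finset.Ioo 0 (2*m) = Finset.Ico 1 (2*m) := by ext x; simp; omega
  rw [hI]
  rw [← Finset.sum_Ico_consecutive (fun i => cnt (2*m) (2*m+q) i)
        (by omega : 1 ≤ m+1) (by omega : m+1 ≤ 2*m),
     ← Finset.sum_Ico_consecutive (fun i => cnt (2*m) q i)
        (by omega : 1 ≤ m+1) (by omega : m+1 ≤ 2*m)]
  -- per-element identities
  have step1 : ∀ i ∈ Finset.Ico 1 (m+1),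
      cnt (2*m) (2*m+q) i = cnt (2*m) q i + (m + i) := by
    intro i hi
    simp only [Finset.mem_Ico] at hi
    have hik : i + (m - i) = m := by omega
    have e1 := cnt_low m (2*m+q) i (m-i) hm (by omega) hik
    have e2 := cnt_low m q i (m-i) hm hq hik
    have e3 : ((m-i)*(2*m+q))/(2*m) = (m-i) + ((m-i)*q)/(2*m) := by
      rw [show (m-i)*(2*m+q) = 2*m*(m-i) + (m-i)*q by ring]
      exact Nat.mul_add_div h2m _ _
    omega
  have step2 : ∀ i ∈ Finset.Ico (m+1) (2*m),
      cnt (2*m) (2*m+q) i = cnt (2*m) q i + (3*m - i) := by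
    intro i hi
    simp only [Finset.mem_Ico] at hi
    have hil : i + (3*m - i) = 3*m := by omega
    have e1 := cnt_high m (2*m+q) i (3*m-i) hm (by omega) hco' hil (by omega) (by omega)
    have e2 := cnt_high m q i (3*m-i) hm hq hco hil (by omega) (by omega)
    have e3 : ((3*m-i)*(2*m+q))/(2*m) = (3*m-i) + ((3*m-i)*q)/(2*m) := by
      rw [show (3*m-i)*(2*m+q) = 2*m*(3*m-i) + (3*m-i)*q by ring]
      exact Nat.mul_add_div h2m _ _
    omega
  rw [Finset.sum_congr rfl step1, Finset.sum_congr rfl step2]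
  have d1 : ∑ i ∈ Finset.Ico 1 (m+1), (cnt (2*m) q i + (m + i))
      = (∑ i ∈ Finset.Ico 1 (m+1), cnt (2*m) q i) + ∑ i ∈ Finset.Ico 1 (m+1), (m + i) :=
    Finset.sum_add_distrib
  have d2 : ∑ i ∈ Finset.Ico (m+1) (2*m), (cnt (2*m) q i + (3*m - i))
      = (∑ i ∈ Finset.Ico (m+1) (2*m), cnt (2*m) q i)
        + ∑ i ∈ Finset.Ico (m+1) (2*m), (3*m - i) :=
    Finset.sum_add_distrib
  rw [d1, d2]
  -- now compute the two extra sums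
  have hrefl : ∑ i ∈ Finset.Ico (m+1) (2*m), (3*m - i)
      = ∑ i ∈ Finset.Ico (m+1) (2*m), i := by
    apply Finset.sum_nbij' (fun x => 3*m - x) (fun x => 3*m - x)
    · intro a ha; simp only [Finset.mem_Ico] at *; omega
    · intro a ha; simp only [Finset.mem_Ico] at *; omega
    · intro a ha; simp only [Finset.mem_Ico] at *; omega
    · intro a ha; simp only [Finset.mem_Ico] at *; omega
    · intro a ha; rfl
  have hsplit : (∑ i ∈ Finset.Ico 1 (m+1), (m + i))
      = m*m + ∑ i ∈ Finset.Ico 1 (m+1), i := by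
    rw [Finset.sum_add_distrib, Finset.sum_const, Nat.card_Ico, smul_eq_mul]
    simp
  have htot : (∑ i ∈ Finset.Ico 1 (m+1), i) + ∑ i ∈ Finset.Ico (m+1) (2*m), i
      = ∑ i ∈ Finset.range (2*m), i := by
    rw [Finset.sum_Ico_consecutive (fun i => i) (by omega : 1 ≤ m+1) (by omega : m+1 ≤ 2*m)]
    rw [Finset.range_eq_Ico,
      ← Finset.sum_Ico_consecutive (fun i => i) (by omega : 0 ≤ 1) (by omega : 1 ≤ 2*m)]
    simp
  have h2 := Finset.sum_range_id_mul_two (2*m)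
  have e2 : 2*m*(2*m-1) + 2*m = 4*(m*m) := by
    rw [← Nat.mul_succ, show (2*m-1).succ = 2*m by omega]
    ring
  have h3 : (∑ i ∈ Finset.range (2*m), i) * 2 + 2*m = 4*(m*m) := by rw [h2]; exact e2
  rw [hrefl, hsplit]
  set M := m*m with hM
  omega


theorem sigmaClassical_add_p_even (p q : ℕ) (hp : 0 < p) (hpq : p < q)
    (hco : Nat.Coprime p q) (hpe : Even p) :
    sigmaClassical p (p + q) = sigmaClassical p q + (p : ℤ) ^ 2 / 2 := by
  obtain ⟨m, rfl⟩ : ∃ m, p = 2*m := by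
    obtain ⟨m, hm⟩ := hpe; exact ⟨m, by omega⟩
  have hm : 0 < m := by omega
  have hq : 0 < q := by omega
  have hL1 := lattice_eq (2*m) q (by omega) hq
  have hL2 := lattice_eq (2*m) (2*m+q) (by omega) (by omega)
  have hk := key m q hm hq hco
  have hkz : ((∑ i ∈ Finset.Ioo 0 (2*m), cnt (2*m) (2*m+q) i : ℕ) : ℤ) + (m:ℤ)
      = ((∑ i ∈ Finset.Ioo 0 (2*m), cnt (2*m) q i : ℕ) : ℤ) + 3*((m:ℤ)*(m:ℤ)) := by
    exact_mod_cast hk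
  have hdiv : ((2*m : ℕ) : ℤ)^2 / 2 = 2*(m:ℤ)^2 := by
    rw [show ((2*m : ℕ):ℤ)^2 = 2*(2*(m:ℤ)^2) by push_cast; ring]
    exact Int.mul_ediv_cancel_left _ two_ne_zero
  unfold sigmaClassical sigmaT
  rw [hL2, hL1, hdiv]
  push_cast at hkz ⊢
  linear_combination (2:ℤ) * hkz
end
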